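/- arXiv:2303.16448 — 8 statements merged into one kernel-verified Lean document; each statement's English description precedes it below -/
import Mathlib

section
/- Let a < b, let T₁, T₂, R₁, R₂ : ℝ × ℝ → ℝ be continuous on [a,b]², and let v : ℝ → ℝ be continuous on [a,b]. Define (𝒯v)(s) = ∫_a^s T₁(s,θ)v(θ)dθ + ∫_s^b T₂(s,θ)v(θ)dθ and (ℛv)(s) = ∫_a^s R₁(s,θ)v(θ)dθ + ∫_s^b R₂(s,θ)v(θ)dθ. Define B₁(s,θ,η) = T₁(s,θ)R₁(s,η) + T₁(s,η)R₁(s,θ), B₂(s,θ,η) = T₂(s,θ)R₁(s,η) + T₁(s,η)R₂(s,θ), and B₃(s,θ,η) = T₂(s,θ)R₂(s,η) + T₂(s,η)R₂(s,θ). Then for every s ∈ [a,b], (𝒯v)(s)·(ℛv)(s) = ∫_a^s ∫_a^θ B₁(s,θ,η)v(θ)v(η) dη dθ + ∫_s^b ∫_a^s B₂(s,θ,η)v(θ)v(η) dη dθ + ∫_s^b ∫_s^θ B₃(s,θ,η)v(θ)v(η) dη dθ. -/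
open MeasureTheory intervalIntegral

lemma exists_cont_ext {s : Set ℝ} (hs : IsClosed s) {f : ℝ → ℝ}
    (hf : ContinuousOn f s) : ∃ g : ℝ → ℝ, Continuous g ∧ Set.EqOn g f s := by
  obtain ⟨g, hg⟩ := ContinuousMap.exists_restrict_eq hs ⟨s.restrict f, hf.restrict⟩
  exact ⟨g, g.continuous, fun x hx => congrFun (congrArg DFunLike.coe hg) ⟨x, hx⟩⟩

lemma triangle_prod (f g : ℝ → ℝ) (hf : Continuous f) (hg : Continuous g) (c d : ℝ) :
    (∫ x in c..d, f x) * (∫ x in c..d, g x)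
      = ∫ θ in c..d, ∫ η in c..θ, (f θ * g η + f η * g θ) := by
  set F : ℝ → ℝ := fun x => ∫ t in c..x, f t with hFdef
  set G : ℝ → ℝ := fun x => ∫ t in c..x, g t with hGdef
  have hFc : Continuous F := intervalIntegral.continuous_primitive (fun a b => hf.intervalIntegrable a b) c
  have hGc : Continuous G := intervalIntegral.continuous_primitive (fun a b => hg.intervalIntegrable a b) c
  have hF : ∀ x, HasDerivAt F (f x) x := fun x =>
    integral_hasDerivAt_right (hf.intervalIntegrable _ _)
      (hf.stronglyMeasurableAtFilter _ _) hf.continuousAt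
  have hG : ∀ x, HasDerivAt G (g x) x := fun x =>
    integral_hasDerivAt_right (hg.intervalIntegrable _ _)
      (hg.stronglyMeasurableAtFilter _ _) hg.continuousAt
  have inner : ∀ θ, (∫ η in c..θ, (f θ * g η + f η * g θ)) = f θ * G θ + F θ * g θ := by
    intro θ
    rw [intervalIntegral.integral_add (f := fun η => f θ * g η) (g := fun η => f η * g θ) ((continuous_const.mul hg).intervalIntegrable _ _)
        ((hf.mul continuous_const).intervalIntegrable _ _),
      intervalIntegral.integral_const_mul, intervalIntegral.integral_mul_const]
  simp_rw [inner]
  have hcont : Continuous fun θ => f θ * G θ + F θ * g θ :=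
    (hf.mul hGc).add (hFc.mul hg)
  have h2 : ∀ x, HasDerivAt (fun y => ∫ θ in c..y, (f θ * G θ + F θ * g θ))
      (f x * G x + F x * g x) x := fun x =>
    integral_hasDerivAt_right (hcont.intervalIntegrable _ _)
      (hcont.stronglyMeasurableAtFilter _ _) hcont.continuousAt
  have key : ∀ x, HasDerivAt
      (fun y => F y * G y - ∫ θ in c..y, (f θ * G θ + F θ * g θ)) 0 x := by
    intro x
    have := ((hF x).mul (hG x)).sub (h2 x)
    rw [sub_self] at this; exact this
  have hconst := is_const_of_deriv_eq_zero (f := fun y => F y * G y - ∫ θ in c..y, (f θ * G θ + F θ * g θ))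
    (fun x => (key x).differentiableAt) (fun x => (key x).deriv) d c
  simp only [intervalIntegral.integral_same, hFdef, hGdef] at hconst
  have : F d * G d - ∫ θ in c..d, (f θ * G θ + F θ * g θ) = 0 := by
    simpa using hconst
  linarith

lemma rect_prod (f₁ g₁ f₂ g₂ : ℝ → ℝ) (hf₁ : Continuous f₁) (hg₁ : Continuous g₁)
    (hf₂ : Continuous f₂) (hg₂ : Continuous g₂) (p q r : ℝ) :
    (∫ θ in q..r, f₂ θ) * (∫ η in p..q, g₁ η)
      + (∫ η in p..q, f₁ η) * (∫ θ in q..r, g₂ θ)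
    = ∫ θ in q..r, ∫ η in p..q, (f₂ θ * g₁ η + f₁ η * g₂ θ) := by
  have inner : ∀ θ, (∫ η in p..q, (f₂ θ * g₁ η + f₁ η * g₂ θ))
      = f₂ θ * (∫ η in p..q, g₁ η) + (∫ η in p..q, f₁ η) * g₂ θ := by
    intro θ
    rw [intervalIntegral.integral_add (f := fun η => f₂ θ * g₁ η) (g := fun η => f₁ η * g₂ θ) ((continuous_const.mul hg₁).intervalIntegrable _ _)
        ((hf₁.mul continuous_const).intervalIntegrable _ _),
      intervalIntegral.integral_const_mul, intervalIntegral.integral_mul_const]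
  simp_rw [inner]
  rw [intervalIntegral.integral_add (f := fun θ => f₂ θ * ∫ η in p..q, g₁ η) (g := fun θ => (∫ η in p..q, f₁ η) * g₂ θ) ((hf₂.mul continuous_const).intervalIntegrable _ _)
      ((continuous_const.mul hg₂).intervalIntegrable _ _),
    intervalIntegral.integral_mul_const, intervalIntegral.integral_const_mul]

theorem tensor_product_of_2PI_operators (a b : ℝ) (hab : a < b)
    (T₁ T₂ R₁ R₂ : ℝ × ℝ → ℝ)
    (hT₁ : ContinuousOn T₁ (Set.Icc a b ×ˢ Set.Icc a b))
    (hT₂ : ContinuousOn T₂ (Set.Icc a b ×ˢ Set.Icc a b))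
    (hR₁ : ContinuousOn R₁ (Set.Icc a b ×ˢ Set.Icc a b))
    (hR₂ : ContinuousOn R₂ (Set.Icc a b ×ˢ Set.Icc a b))
    (v : ℝ → ℝ) (hv : ContinuousOn v (Set.Icc a b))
    (s : ℝ) (hs : s ∈ Set.Icc a b) :
    ((∫ θ in a..s, T₁ (s, θ) * v θ) + ∫ θ in s..b, T₂ (s, θ) * v θ)
      * ((∫ θ in a..s, R₁ (s, θ) * v θ) + ∫ θ in s..b, R₂ (s, θ) * v θ)
    = (∫ θ in a..s, ∫ η in a..θ,
        (T₁ (s, θ) * R₁ (s, η) + T₁ (s, η) * R₁ (s, θ)) * v θ * v η)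
      + (∫ θ in s..b, ∫ η in a..s,
        (T₂ (s, θ) * R₁ (s, η) + T₁ (s, η) * R₂ (s, θ)) * v θ * v η)
      + (∫ θ in s..b, ∫ η in s..θ,
        (T₂ (s, θ) * R₂ (s, η) + T₂ (s, η) * R₂ (s, θ)) * v θ * v η) := by
  obtain ⟨has, hsb⟩ := hs
  have hIcc : IsClosed (Set.Icc a b) := isClosed_Icc
  have slice : ∀ K : ℝ × ℝ → ℝ, ContinuousOn K (Set.Icc a b ×ˢ Set.Icc a b) →
      ContinuousOn (fun θ => K (s, θ) * v θ) (Set.Icc a b) := by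
    intro K hK
    exact (hK.comp (Continuous.continuousOn (by continuity))
      (fun θ hθ => ⟨⟨has, hsb⟩, hθ⟩)).mul hv
  obtain ⟨F₁, hF₁c, hF₁⟩ := exists_cont_ext hIcc (slice T₁ hT₁)
  obtain ⟨F₂, hF₂c, hF₂⟩ := exists_cont_ext hIcc (slice T₂ hT₂)
  obtain ⟨G₁, hG₁c, hG₁⟩ := exists_cont_ext hIcc (slice R₁ hR₁)
  obtain ⟨G₂, hG₂c, hG₂⟩ := exists_cont_ext hIcc (slice R₂ hR₂)
  have subL : Set.uIcc a s ⊆ Set.Icc a b := by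
    rw [Set.uIcc_of_le has]; exact Set.Icc_subset_Icc le_rfl hsb
  have subR : Set.uIcc s b ⊆ Set.Icc a b := by
    rw [Set.uIcc_of_le hsb]; exact Set.Icc_subset_Icc has le_rfl
  have e1 : (∫ θ in a..s, T₁ (s, θ) * v θ) = ∫ θ in a..s, F₁ θ :=
    (intervalIntegral.integral_congr (fun θ hθ => hF₁ (subL hθ))).symm
  have e2 : (∫ θ in s..b, T₂ (s, θ) * v θ) = ∫ θ in s..b, F₂ θ :=
    (intervalIntegral.integral_congr (fun θ hθ => hF₂ (subR hθ))).symm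
  have e3 : (∫ θ in a..s, R₁ (s, θ) * v θ) = ∫ θ in a..s, G₁ θ :=
    (intervalIntegral.integral_congr (fun θ hθ => hG₁ (subL hθ))).symm
  have e4 : (∫ θ in s..b, R₂ (s, θ) * v θ) = ∫ θ in s..b, G₂ θ :=
    (intervalIntegral.integral_congr (fun θ hθ => hG₂ (subR hθ))).symm
  have d1 : (∫ θ in a..s, ∫ η in a..θ,
        (T₁ (s, θ) * R₁ (s, η) + T₁ (s, η) * R₁ (s, θ)) * v θ * v η)
      = ∫ θ in a..s, ∫ η in a..θ, (F₁ θ * G₁ η + F₁ η * G₁ θ) := by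
    apply intervalIntegral.integral_congr
    intro θ hθ
    have hθ' := subL hθ
    apply intervalIntegral.integral_congr
    intro η hη
    have hη' : η ∈ Set.Icc a b :=
      Set.uIcc_subset_Icc ⟨le_rfl, le_of_lt hab⟩ hθ' hη
    simp only [hF₁ hθ', hF₁ hη', hG₁ hθ', hG₁ hη']
    ring
  have d2 : (∫ θ in s..b, ∫ η in a..s,
        (T₂ (s, θ) * R₁ (s, η) + T₁ (s, η) * R₂ (s, θ)) * v θ * v η)
      = ∫ θ in s..b, ∫ η in a..s, (F₂ θ * G₁ η + F₁ η * G₂ θ) := by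
    apply intervalIntegral.integral_congr
    intro θ hθ
    have hθ' := subR hθ
    apply intervalIntegral.integral_congr
    intro η hη
    have hη' := subL hη
    simp only [hF₂ hθ', hF₁ hη', hG₁ hη', hG₂ hθ']
    ring
  have d3 : (∫ θ in s..b, ∫ η in s..θ,
        (T₂ (s, θ) * R₂ (s, η) + T₂ (s, η) * R₂ (s, θ)) * v θ * v η)
      = ∫ θ in s..b, ∫ η in s..θ, (F₂ θ * G₂ η + F₂ η * G₂ θ) := by
    apply intervalIntegral.integral_congr
    intro θ hθ
    have hθ' := subR hθ
    apply intervalIntegral.integral_congr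
    intro η hη
    have hη' : η ∈ Set.Icc a b :=
      Set.uIcc_subset_Icc ⟨has, hsb⟩ hθ' hη
    simp only [hF₂ hθ', hF₂ hη', hG₂ hθ', hG₂ hη']
    ring
  rw [e1, e2, e3, e4, d1, d2, d3,
    ← triangle_prod F₁ G₁ hF₁c hG₁c a s, ← triangle_prod F₂ G₂ hF₂c hG₂c s b,
    ← rect_prod F₁ G₁ F₂ G₂ hF₁c hG₁c hF₂c hG₂c a s b]
  ring
end

section
/- Let u : ℝ → ℝ be twice continuously differentiable on [0,1] with u(0) = 0 and u(1) = 0. Then for every s ∈ [0,1], ∫_0^s (s−1)·θ·u''(θ) dθ + ∫_s^1 s·(θ−1)·u''(θ) dθ = u(s). -/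
open MeasureTheory

lemma ftc_icc (f f' : ℝ → ℝ)
    (hf : ∀ x ∈ Set.Icc (0:ℝ) 1, HasDerivWithinAt f (f' x) (Set.Icc 0 1) x)
    (hcont : ContinuousOn f' (Set.Icc 0 1))
    {a b : ℝ} (ha : a ∈ Set.Icc (0:ℝ) 1) (hb : b ∈ Set.Icc (0:ℝ) 1) (hab : a ≤ b) :
    ∫ x in a..b, f' x = f b - f a := by
  have hsub : Set.Icc a b ⊆ Set.Icc (0:ℝ) 1 := Set.Icc_subset_Icc ha.1 hb.2
  apply intervalIntegral.integral_eq_sub_of_hasDeriv_right_of_le hab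
  · intro x hx
    exact ((hf x (hsub hx)).continuousWithinAt).mono hsub
  · intro x hx
    have hx01 : x ∈ Set.Ioo (0:ℝ) 1 :=
      ⟨lt_of_le_of_lt ha.1 hx.1, lt_of_lt_of_le hx.2 hb.2⟩
    have : HasDerivAt f (f' x) x :=
      (hf x ⟨hx01.1.le, hx01.2.le⟩).hasDerivAt
        (Icc_mem_nhds hx01.1 hx01.2)
    exact this.hasDerivWithinAt
  · exact (hcont.mono hsub).intervalIntegrable_of_Icc hab

theorem Top_reconstructs_state (u u' u'' : ℝ → ℝ)
    (hu' : ∀ x ∈ Set.Icc (0:ℝ) 1, HasDerivWithinAt u (u' x) (Set.Icc 0 1) x)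
    (hu'' : ∀ x ∈ Set.Icc (0:ℝ) 1, HasDerivWithinAt u' (u'' x) (Set.Icc 0 1) x)
    (hcont : ContinuousOn u'' (Set.Icc 0 1))
    (h0 : u 0 = 0) (h1 : u 1 = 0) :
    ∀ s ∈ Set.Icc (0:ℝ) 1,
      (∫ θ in (0:ℝ)..s, (s - 1) * θ * u'' θ)
        + (∫ θ in s..(1:ℝ), s * (θ - 1) * u'' θ) = u s := by
  intro s hs
  -- first: ∫_0^s θ * u'' θ = s * u' s - u s
  have hI1 : ∫ θ in (0:ℝ)..s, θ * u'' θ = s * u' s - u s := by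
    have := ftc_icc (fun θ => θ * u' θ - u θ) (fun θ => θ * u'' θ)
      (fun x hx => by
        have h := ((hasDerivWithinAt_id x _).mul (hu'' x hx)).sub (hu' x hx)
        exact h.congr_deriv (by simp only [id]; ring))
      (by
        have : ContinuousOn (fun θ : ℝ => θ * u'' θ) (Set.Icc 0 1) :=
          continuousOn_id.mul hcont
        exact this)
      (Set.left_mem_Icc.mpr zero_le_one) hs hs.1
    simpa [h0] using this
  have hI2 : ∫ θ in s..(1:ℝ), (θ - 1) * u'' θ = -((s - 1) * u' s - u s) := by
    have := ftc_icc (fun θ => (θ - 1) * u' θ - u θ) (fun θ => (θ - 1) * u'' θ)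
      (fun x hx => by
        have h := (((hasDerivWithinAt_id x _).sub_const 1).mul (hu'' x hx)).sub (hu' x hx)
        exact h.congr_deriv (by simp only [id]; ring))
      (by
        have : ContinuousOn (fun θ : ℝ => (θ - 1) * u'' θ) (Set.Icc 0 1) :=
          (continuousOn_id.sub continuousOn_const).mul hcont
        exact this)
      hs (Set.right_mem_Icc.mpr zero_le_one) hs.2
    simp only [sub_self, zero_mul, zero_sub] at this
    rw [this, h1]
    ring
  have e1 : (∫ θ in (0:ℝ)..s, (s - 1) * θ * u'' θ)
      = (s - 1) * ∫ θ in (0:ℝ)..s, θ * u'' θ := by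
    rw [← intervalIntegral.integral_const_mul]
    congr 1; ext θ; ring
  have e2 : (∫ θ in s..(1:ℝ), s * (θ - 1) * u'' θ)
      = s * ∫ θ in s..(1:ℝ), (θ - 1) * u'' θ := by
    rw [← intervalIntegral.integral_const_mul]
    congr 1; ext θ; ring
  rw [e1, e2, hI1, hI2]
  ring
end

section
/- Let v, w : ℝ → ℝ be continuous on [0,1]. Define (𝒯v)(s) = ∫_0^s (s−1)θ·v(θ)dθ + ∫_s^1 s(θ−1)·v(θ)dθ and (ℛv)(s) = ∫_0^s θ·v(θ)dθ + ∫_s^1 (θ−1)·v(θ)dθ, and similarly for w. Then ∫_0^1 w(s)·(𝒯v)(s) ds = −∫_0^1 (ℛw)(s)·(ℛv)(s) ds. In particular, ∫_0^1 v(s)·(𝒯v)(s) ds = −∫_0^1 ((ℛv)(s))² ds ≤ 0. -/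
open MeasureTheory

/-- The 2-PI operator `𝒯` associated with Burgers' equation with Dirichlet BCs on `[0,1]`. -/
noncomputable def TopPI (v : ℝ → ℝ) (s : ℝ) : ℝ :=
  (∫ θ in (0:ℝ)..s, (s - 1) * θ * v θ) + ∫ θ in s..(1:ℝ), s * (θ - 1) * v θ

/-- The 2-PI operator `ℛ` associated with Burgers' equation with Dirichlet BCs on `[0,1]`. -/
noncomputable def RopPI (v : ℝ → ℝ) (s : ℝ) : ℝ :=
  (∫ θ in (0:ℝ)..s, θ * v θ) + ∫ θ in s..(1:ℝ), (θ - 1) * v θ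

section Aux

variable {V W : ℝ → ℝ}

lemma hasDerivAt_aux1 (hV : Continuous V) (s : ℝ) :
    HasDerivAt (fun s => ∫ θ in (0:ℝ)..s, θ * V θ) (s * V s) s :=
  intervalIntegral.integral_hasDerivAt_right
    ((continuous_id.mul hV).intervalIntegrable _ _)
    ((continuous_id.mul hV).stronglyMeasurableAtFilter _ _)
    (continuous_id.mul hV).continuousAt

lemma hasDerivAt_aux2 (hV : Continuous V) (s : ℝ) :
    HasDerivAt (fun s => ∫ θ in (1:ℝ)..s, (θ - 1) * V θ) ((s - 1) * V s) s :=
  intervalIntegral.integral_hasDerivAt_right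
    (((continuous_id.sub continuous_const).mul hV).intervalIntegrable _ _)
    (((continuous_id.sub continuous_const).mul hV).stronglyMeasurableAtFilter _ _)
    ((continuous_id.sub continuous_const).mul hV).continuousAt

lemma Rop_eq (V : ℝ → ℝ) : RopPI V = fun s =>
    (∫ θ in (0:ℝ)..s, θ * V θ) - ∫ θ in (1:ℝ)..s, (θ - 1) * V θ := by
  funext s
  rw [RopPI, intervalIntegral.integral_symm 1 s]
  ring

lemma hasDerivAt_Rop (hV : Continuous V) (s : ℝ) :
    HasDerivAt (RopPI V) (V s) s := by
  rw [Rop_eq]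
  have := (hasDerivAt_aux1 hV s).sub (hasDerivAt_aux2 hV s)
  convert this using 1
  · rfl
  · rfl
  · rfl
  ring

lemma Top_eq (V : ℝ → ℝ) : TopPI V = fun s =>
    (s - 1) * (∫ θ in (0:ℝ)..s, θ * V θ) - s * ∫ θ in (1:ℝ)..s, (θ - 1) * V θ := by
  funext s
  rw [TopPI, intervalIntegral.integral_symm 1 s]
  simp only [mul_assoc, intervalIntegral.integral_const_mul]
  ring

lemma hasDerivAt_Top (hV : Continuous V) (s : ℝ) :
    HasDerivAt (TopPI V) (RopPI V s) s := by
  rw [Top_eq]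
  have h1 := (((hasDerivAt_id s).sub_const 1).mul (hasDerivAt_aux1 hV s)).sub
    ((hasDerivAt_id s).mul (hasDerivAt_aux2 hV s))
  convert h1 using 1
  · rfl
  · rfl
  · rfl
  rw [Rop_eq]
  simp only [id_eq]
  ring

lemma Top_zero (V : ℝ → ℝ) : TopPI V 0 = 0 := by
  simp [Top_eq V]

lemma Top_one (V : ℝ → ℝ) : TopPI V 1 = 0 := by
  simp [Top_eq V]

lemma cont_Rop (hV : Continuous V) : Continuous (RopPI V) :=
  continuous_iff_continuousAt.2 fun s => (hasDerivAt_Rop hV s).continuousAt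

lemma cont_Top (hV : Continuous V) : Continuous (TopPI V) :=
  continuous_iff_continuousAt.2 fun s => (hasDerivAt_Top hV s).continuousAt

lemma key (hV : Continuous V) (hW : Continuous W) :
    (∫ s in (0:ℝ)..1, W s * TopPI V s) = -∫ s in (0:ℝ)..1, RopPI W s * RopPI V s := by
  have hint1 : IntervalIntegrable (fun s => W s * TopPI V s) volume 0 1 :=
    (hW.mul (cont_Top hV)).intervalIntegrable _ _
  have hint2 : IntervalIntegrable (fun s => RopPI W s * RopPI V s) volume 0 1 :=
    ((cont_Rop hW).mul (cont_Rop hV)).intervalIntegrable _ _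
  have hibp := intervalIntegral.integral_deriv_mul_eq_sub (a := (0:ℝ)) (b := 1)
    (u := RopPI W) (v := TopPI V) (u' := W) (v' := RopPI V)
    (fun x _ => hasDerivAt_Rop hW x) (fun x _ => hasDerivAt_Top hV x)
    (hW.intervalIntegrable _ _) ((cont_Rop hV).intervalIntegrable _ _)
  rw [intervalIntegral.integral_add hint1 hint2, Top_zero, Top_one] at hibp
  simp at hibp
  linarith

/-- clamp to [0,1] -/
noncomputable def clampI (x : ℝ) : ℝ := max 0 (min 1 x)

lemma clampI_mem (x : ℝ) : clampI x ∈ Set.Icc (0:ℝ) 1 :=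
  ⟨le_max_left _ _, max_le (by norm_num) (min_le_left _ _)⟩

lemma clampI_eq {x : ℝ} (hx : x ∈ Set.Icc (0:ℝ) 1) : clampI x = x := by
  simp [clampI, min_eq_right hx.2, max_eq_right hx.1]

lemma cont_clamp_comp (hv : ContinuousOn V (Set.Icc 0 1)) : Continuous (V ∘ clampI) :=
  hv.comp_continuous (continuous_const.max (continuous_const.min continuous_id)) clampI_mem

lemma Rop_congr {s : ℝ} (hs : s ∈ Set.Icc (0:ℝ) 1) :
    RopPI V s = RopPI (V ∘ clampI) s := by
  unfold RopPI
  congr 1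
  · refine intervalIntegral.integral_congr fun θ hθ => ?_
    rw [Set.uIcc_of_le hs.1] at hθ
    rw [Function.comp_apply, clampI_eq ⟨hθ.1, hθ.2.trans hs.2⟩]
  · refine intervalIntegral.integral_congr fun θ hθ => ?_
    rw [Set.uIcc_of_le hs.2] at hθ
    rw [Function.comp_apply, clampI_eq ⟨hs.1.trans hθ.1, hθ.2⟩]

lemma Top_congr {s : ℝ} (hs : s ∈ Set.Icc (0:ℝ) 1) :
    TopPI V s = TopPI (V ∘ clampI) s := by
  unfold TopPI
  congr 1
  · refine intervalIntegral.integral_congr fun θ hθ => ?_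
    rw [Set.uIcc_of_le hs.1] at hθ
    rw [Function.comp_apply, clampI_eq ⟨hθ.1, hθ.2.trans hs.2⟩]
  · refine intervalIntegral.integral_congr fun θ hθ => ?_
    rw [Set.uIcc_of_le hs.2] at hθ
    rw [Function.comp_apply, clampI_eq ⟨hs.1.trans hθ.1, hθ.2⟩]

end Aux

theorem Top_eq_neg_Rop_adjoint_Rop (v w : ℝ → ℝ)
    (hv : ContinuousOn v (Set.Icc 0 1)) (hw : ContinuousOn w (Set.Icc 0 1)) :
    ((∫ s in (0:ℝ)..1, w s * TopPI v s) = -∫ s in (0:ℝ)..1, RopPI w s * RopPI v s)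
    ∧ ((∫ s in (0:ℝ)..1, v s * TopPI v s) = -∫ s in (0:ℝ)..1, (RopPI v s) ^ 2)
    ∧ (∫ s in (0:ℝ)..1, v s * TopPI v s) ≤ 0 := by
  have hVc := cont_clamp_comp hv
  have hWc := cont_clamp_comp hw
  have main : ∀ (u : ℝ → ℝ), ContinuousOn u (Set.Icc 0 1) → Continuous (u ∘ clampI) →
      (∫ s in (0:ℝ)..1, u s * TopPI v s) = -∫ s in (0:ℝ)..1, RopPI u s * RopPI v s := by
    intro u hu hUc
    have e1 : (∫ s in (0:ℝ)..1, u s * TopPI v s)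
        = ∫ s in (0:ℝ)..1, (u ∘ clampI) s * TopPI (v ∘ clampI) s := by
      refine intervalIntegral.integral_congr fun s hs => ?_
      rw [Set.uIcc_of_le (by norm_num : (0:ℝ) ≤ 1)] at hs
      rw [← Top_congr hs, Function.comp_apply, clampI_eq hs]
    have e2 : (∫ s in (0:ℝ)..1, RopPI u s * RopPI v s)
        = ∫ s in (0:ℝ)..1, RopPI (u ∘ clampI) s * RopPI (v ∘ clampI) s := by
      refine intervalIntegral.integral_congr fun s hs => ?_
      rw [Set.uIcc_of_le (by norm_num : (0:ℝ) ≤ 1)] at hs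
      rw [← Rop_congr hs, ← Rop_congr hs]
    rw [e1, e2]
    exact key hVc hUc
  have h1 := main w hw hWc
  have h2 := main v hv hVc
  have h2' : (∫ s in (0:ℝ)..1, v s * TopPI v s) = -∫ s in (0:ℝ)..1, (RopPI v s) ^ 2 := by
    rw [h2]
    congr 1
    exact intervalIntegral.integral_congr fun s _ => (pow_two (RopPI v s)).symm
  refine ⟨h1, h2', ?_⟩
  rw [h2']
  exact neg_nonpos.2 (intervalIntegral.integral_nonneg (by norm_num) fun s _ => sq_nonneg _)
end

section
/- Let u : ℝ → ℝ be four times continuously differentiable on [0,1] with u(0) = 0, u(1) = 0, u'(0) = 0, and u'(1) = 0. Then for every s ∈ [0,1], all three of the following hold: (i) −∫_0^s (1/6)(s−1)²θ²(2sθ−3s+θ)·u''''(θ) dθ − ∫_s^1 (1/6)(θ−1)²s²(2sθ−3θ+s)·u''''(θ) dθ = u(s); (ii) −∫_0^s (1/2)(s−1)θ²(2sθ−3s+1)·u''''(θ) dθ − ∫_s^1 (1/2)s(θ−1)²(2sθ+s−2θ)·u''''(θ) dθ = u'(s); (iii) −∫_0^s θ²(2sθ−3s−θ+2)·u''''(θ)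 dθ − ∫_s^1 (θ−1)²(2sθ+s−θ)·u''''(θ) dθ = u''(s). -/
open MeasureTheory intervalIntegral
lemma cubicD (c0 c1 c2 c3 d x : ℝ) (hd : d = c1 + 2*c2*x + 3*c3*x^2) :
    HasDerivAt (fun θ => c0 + c1*θ + c2*θ^2 + c3*θ^3) d x := by
  have h := (((hasDerivAt_const x c0).add ((hasDerivAt_id' (𝕜 := ℝ) x).const_mul c1)).add
      ((hasDerivAt_pow 2 x).const_mul c2)).add ((hasDerivAt_pow 3 x).const_mul c3)
  refine h.congr_deriv ?_
  push_cast
  rw [hd]; ring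

lemma quadD (c0 c1 c2 d x : ℝ) (hd : d = c1 + 2*c2*x) :
    HasDerivAt (fun θ => c0 + c1*θ + c2*θ^2) d x := by
  have h := ((hasDerivAt_const x c0).add ((hasDerivAt_id' (𝕜 := ℝ) x).const_mul c1)).add
      ((hasDerivAt_pow 2 x).const_mul c2)
  refine h.congr_deriv ?_
  push_cast
  rw [hd]; ring

lemma linD (c0 c1 x : ℝ) :
    HasDerivAt (fun θ => c0 + c1*θ) c1 x := by
  have h := (hasDerivAt_const x c0).add ((hasDerivAt_id' (𝕜 := ℝ) x).const_mul c1)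
  refine h.congr_deriv ?_
  ring

lemma ibp4 (u u' u'' u''' u'''' : ℝ → ℝ)
    (hu' : ∀ x ∈ Set.Icc (0:ℝ) 1, HasDerivWithinAt u (u' x) (Set.Icc 0 1) x)
    (hu'' : ∀ x ∈ Set.Icc (0:ℝ) 1, HasDerivWithinAt u' (u'' x) (Set.Icc 0 1) x)
    (hu''' : ∀ x ∈ Set.Icc (0:ℝ) 1, HasDerivWithinAt u'' (u''' x) (Set.Icc 0 1) x)
    (hu'''' : ∀ x ∈ Set.Icc (0:ℝ) 1, HasDerivWithinAt u''' (u'''' x) (Set.Icc 0 1) x)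
    (hcont : ContinuousOn u'''' (Set.Icc 0 1))
    (a b : ℝ) (ha : a ∈ Set.Icc (0:ℝ) 1) (hb : b ∈ Set.Icc (0:ℝ) 1)
    (c0 c1 c2 c3 : ℝ) :
    (∫ θ in a..b, (c0 + c1*θ + c2*θ^2 + c3*θ^3) * u'''' θ)
      = (c0 + c1*b + c2*b^2 + c3*b^3) * u''' b - (c0 + c1*a + c2*a^2 + c3*a^3) * u''' a
        - (c1 + 2*c2*b + 3*c3*b^2) * u'' b + (c1 + 2*c2*a + 3*c3*a^2) * u'' a
        + (2*c2 + 6*c3*b) * u' b - (2*c2 + 6*c3*a) * u' a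
        - 6*c3 * u b + 6*c3 * u a := by
  have hsub : Set.uIcc a b ⊆ Set.Icc (0:ℝ) 1 := by
    rw [← Set.uIcc_of_le (zero_le_one (α := ℝ))]
    exact Set.uIcc_subset_uIcc (by rwa [Set.uIcc_of_le zero_le_one])
      (by rwa [Set.uIcc_of_le zero_le_one])
  have cu : ContinuousOn u (Set.Icc (0:ℝ) 1) := fun x hx => (hu' x hx).continuousWithinAt
  have cu' : ContinuousOn u' (Set.Icc (0:ℝ) 1) := fun x hx => (hu'' x hx).continuousWithinAt
  have cu'' : ContinuousOn u'' (Set.Icc (0:ℝ) 1) := fun x hx => (hu''' x hx).continuousWithinAt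
  have cu''' : ContinuousOn u''' (Set.Icc (0:ℝ) 1) := fun x hx => (hu'''' x hx).continuousWithinAt
  have step1 : (∫ θ in a..b, (c0 + c1*θ + c2*θ^2 + c3*θ^3) * u'''' θ)
      = (c0 + c1*b + c2*b^2 + c3*b^3) * u''' b - (c0 + c1*a + c2*a^2 + c3*a^3) * u''' a
        - ∫ θ in a..b, (c1 + 2*c2*θ + 3*c3*θ^2) * u''' θ :=
    integral_mul_deriv_eq_deriv_mul_of_hasDerivWithinAt
      (fun x _ => (cubicD c0 c1 c2 c3 _ x rfl).hasDerivWithinAt)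
      (fun x hx => (hu'''' x (hsub hx)).mono hsub)
      (Continuous.intervalIntegrable (by fun_prop) _ _)
      ((hcont.mono hsub).intervalIntegrable)
  have step2 : (∫ θ in a..b, (c1 + 2*c2*θ + 3*c3*θ^2) * u''' θ)
      = (c1 + 2*c2*b + 3*c3*b^2) * u'' b - (c1 + 2*c2*a + 3*c3*a^2) * u'' a
        - ∫ θ in a..b, (2*c2 + 6*c3*θ) * u'' θ :=
    integral_mul_deriv_eq_deriv_mul_of_hasDerivWithinAt
      (fun x _ => (quadD c1 (2*c2) (3*c3) _ x (by ring)).hasDerivWithinAt)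
      (fun x hx => (hu''' x (hsub hx)).mono hsub)
      (Continuous.intervalIntegrable (by fun_prop) _ _)
      ((cu'''.mono hsub).intervalIntegrable)
  have step3 : (∫ θ in a..b, (2*c2 + 6*c3*θ) * u'' θ)
      = (2*c2 + 6*c3*b) * u' b - (2*c2 + 6*c3*a) * u' a
        - ∫ θ in a..b, (6*c3) * u' θ :=
    integral_mul_deriv_eq_deriv_mul_of_hasDerivWithinAt
      (fun x _ => (linD (2*c2) (6*c3) x).hasDerivWithinAt)
      (fun x hx => (hu'' x (hsub hx)).mono hsub)
      (Continuous.intervalIntegrable (by fun_prop) _ _)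
      ((cu''.mono hsub).intervalIntegrable)
  have step4 : (∫ θ in a..b, (6*c3) * u' θ)
      = (6*c3) * u b - (6*c3) * u a - ∫ θ in a..b, (0:ℝ) * u θ :=
    integral_mul_deriv_eq_deriv_mul_of_hasDerivWithinAt
      (fun x _ => (hasDerivAt_const x (6*c3)).hasDerivWithinAt)
      (fun x hx => (hu' x (hsub hx)).mono hsub)
      (Continuous.intervalIntegrable (by fun_prop) _ _)
      ((cu'.mono hsub).intervalIntegrable)
  have z : (∫ θ in a..b, (0:ℝ) * u θ) = 0 := by simp
  rw [step1, step2, step3, step4, z]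
  ring

theorem KSE_reconstruction (u u' u'' u''' u'''' : ℝ → ℝ)
    (hu' : ∀ x ∈ Set.Icc (0:ℝ) 1, HasDerivWithinAt u (u' x) (Set.Icc 0 1) x)
    (hu'' : ∀ x ∈ Set.Icc (0:ℝ) 1, HasDerivWithinAt u' (u'' x) (Set.Icc 0 1) x)
    (hu''' : ∀ x ∈ Set.Icc (0:ℝ) 1, HasDerivWithinAt u'' (u''' x) (Set.Icc 0 1) x)
    (hu'''' : ∀ x ∈ Set.Icc (0:ℝ) 1, HasDerivWithinAt u''' (u'''' x) (Set.Icc 0 1) x)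
    (hcont : ContinuousOn u'''' (Set.Icc 0 1))
    (h0 : u 0 = 0) (h1 : u 1 = 0) (h0' : u' 0 = 0) (h1' : u' 1 = 0) :
    ∀ s ∈ Set.Icc (0:ℝ) 1,
      (-(∫ θ in (0:ℝ)..s, (1/6) * (s - 1) ^ 2 * θ ^ 2 * (2*s*θ - 3*s + θ) * u'''' θ)
          - (∫ θ in s..(1:ℝ), (1/6) * (θ - 1) ^ 2 * s ^ 2 * (2*s*θ - 3*θ + s) * u'''' θ)
        = u s)
      ∧ (-(∫ θ in (0:ℝ)..s, (1/2) * (s - 1) * θ ^ 2 * (2*s*θ - 3*s + 1) * u'''' θ)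
          - (∫ θ in s..(1:ℝ), (1/2) * s * (θ - 1) ^ 2 * (2*s*θ + s - 2*θ) * u'''' θ)
        = u' s)
      ∧ (-(∫ θ in (0:ℝ)..s, θ ^ 2 * (2*s*θ - 3*s - θ + 2) * u'''' θ)
          - (∫ θ in s..(1:ℝ), (θ - 1) ^ 2 * (2*s*θ + s - θ) * u'''' θ)
        = u'' s) := by
  intro s hs
  have h0m : (0:ℝ) ∈ Set.Icc (0:ℝ) 1 := by constructor <;> norm_num
  have h1m : (1:ℝ) ∈ Set.Icc (0:ℝ) 1 := by constructor <;> norm_num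
  have eA1 : (∫ θ in (0:ℝ)..s, (1/6) * (s - 1) ^ 2 * θ ^ 2 * (2*s*θ - 3*s + θ) * u'''' θ)
      = (∫ θ in (0:ℝ)..s, (0 + 0*θ + (-(s*(s-1)^2/2))*θ^2 + ((s-1)^2*(2*s+1)/6)*θ^3) * u'''' θ) :=
    intervalIntegral.integral_congr (fun θ _ => by ring)
  have eA2 : (∫ θ in s..(1:ℝ), (1/6) * (θ - 1) ^ 2 * s ^ 2 * (2*s*θ - 3*θ + s) * u'''' θ)
      = (∫ θ in s..(1:ℝ), (s^3/6 + (-(s^2/2))*θ + (s^2*(2-s)/2)*θ^2 + (s^2*(2*s-3)/6)*θ^3) * u'''' θ) :=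
    intervalIntegral.integral_congr (fun θ _ => by ring)
  have eB1 : (∫ θ in (0:ℝ)..s, (1/2) * (s - 1) * θ ^ 2 * (2*s*θ - 3*s + 1) * u'''' θ)
      = (∫ θ in (0:ℝ)..s, (0 + 0*θ + ((s-1)*(1-3*s)/2)*θ^2 + (s*(s-1))*θ^3) * u'''' θ) :=
    intervalIntegral.integral_congr (fun θ _ => by ring)
  have eB2 : (∫ θ in s..(1:ℝ), (1/2) * s * (θ - 1) ^ 2 * (2*s*θ + s - 2*θ) * u'''' θ)
      = (∫ θ in s..(1:ℝ), (s^2/2 + (-s)*θ + (s*(4-3*s)/2)*θ^2 + (s*(s-1))*θ^3) * u'''' θ) :=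
    intervalIntegral.integral_congr (fun θ _ => by ring)
  have eC1 : (∫ θ in (0:ℝ)..s, θ ^ 2 * (2*s*θ - 3*s - θ + 2) * u'''' θ)
      = (∫ θ in (0:ℝ)..s, (0 + 0*θ + (2-3*s)*θ^2 + (2*s-1)*θ^3) * u'''' θ) :=
    intervalIntegral.integral_congr (fun θ _ => by ring)
  have eC2 : (∫ θ in s..(1:ℝ), (θ - 1) ^ 2 * (2*s*θ + s - θ) * u'''' θ)
      = (∫ θ in s..(1:ℝ), (s + (-1)*θ + (2-3*s)*θ^2 + (2*s-1)*θ^3) * u'''' θ) :=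
    intervalIntegral.integral_congr (fun θ _ => by ring)
  rw [eA1, eA2, eB1, eB2, eC1, eC2,
    ibp4 u u' u'' u''' u'''' hu' hu'' hu''' hu'''' hcont 0 s h0m hs _ _ _ _,
    ibp4 u u' u'' u''' u'''' hu' hu'' hu''' hu'''' hcont s 1 hs h1m _ _ _ _,
    ibp4 u u' u'' u''' u'''' hu' hu'' hu''' hu'''' hcont 0 s h0m hs _ _ _ _,
    ibp4 u u' u'' u''' u'''' hu' hu'' hu''' hu'''' hcont s 1 hs h1m _ _ _ _,
    ibp4 u u' u'' u''' u'''' hu' hu'' hu''' hu'''' hcont 0 s h0m hs _ _ _ _,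
    ibp4 u u' u'' u''' u'''' hu' hu'' hu''' hu'''' hcont s 1 hs h1m _ _ _ _,
    h0, h1, h0', h1']
  refine ⟨by ring, by ring, by ring⟩
end

section
/- Let r ∈ ℝ and let u : ℝ → ℝ be three times continuously differentiable on [0,1] with u(0) = 0, u(1) = 0, and u'(1) = 0. Then −2·∫_0^1 e^{(r/2)s}·u(s)·u'''(s) ds = ∫_0^1 e^{(r/2)s}·((r³/8)·u(s)² − (3r/2)·u'(s)²) ds − u'(0)². -/
open MeasureTheory

theorem KdV_linear_term_integration_by_parts (r : ℝ) (u u' u'' u''' : ℝ → ℝ)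
    (hu' : ∀ x ∈ Set.Icc (0:ℝ) 1, HasDerivWithinAt u (u' x) (Set.Icc 0 1) x)
    (hu'' : ∀ x ∈ Set.Icc (0:ℝ) 1, HasDerivWithinAt u' (u'' x) (Set.Icc 0 1) x)
    (hu''' : ∀ x ∈ Set.Icc (0:ℝ) 1, HasDerivWithinAt u'' (u''' x) (Set.Icc 0 1) x)
    (hcont : ContinuousOn u''' (Set.Icc 0 1))
    (h0 : u 0 = 0) (h1 : u 1 = 0) (h1' : u' 1 = 0) :
    (-2 * ∫ s in (0:ℝ)..1, Real.exp ((r/2) * s) * u s * u''' s)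
    = (∫ s in (0:ℝ)..1,
        Real.exp ((r/2) * s) * ((r ^ 3 / 8) * u s ^ 2 - (3 * r / 2) * u' s ^ 2))
      - u' 0 ^ 2 := by
  set a : ℝ := r / 2 with ha
  set f : ℝ → ℝ := fun s => Real.exp (a * s) *
    (-2 * u s * u'' s + u' s ^ 2 + 2 * a * u s * u' s - a ^ 2 * u s ^ 2) with hf
  set f' : ℝ → ℝ := fun s => Real.exp (a * s) *
    (-2 * u s * u''' s - a ^ 3 * u s ^ 2 + 3 * a * u' s ^ 2) with hf'
  have hcu : ContinuousOn u (Set.Icc 0 1) := fun x hx => (hu' x hx).continuousWithinAt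
  have hcu' : ContinuousOn u' (Set.Icc 0 1) := fun x hx => (hu'' x hx).continuousWithinAt
  have hcu'' : ContinuousOn u'' (Set.Icc 0 1) := fun x hx => (hu''' x hx).continuousWithinAt
  have hce : ContinuousOn (fun s => Real.exp (a * s)) (Set.Icc (0:ℝ) 1) :=
    (Real.continuous_exp.comp (continuous_const.mul continuous_id)).continuousOn
  have hderiv : ∀ x ∈ Set.Icc (0:ℝ) 1, HasDerivWithinAt f (f' x) (Set.Icc 0 1) x := by
    intro x hx
    have he : HasDerivWithinAt (fun s => Real.exp (a * s)) (a * Real.exp (a * x))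
        (Set.Icc 0 1) x := by
      have := (Real.hasDerivAt_exp (a * x)).comp x ((hasDerivAt_id x).const_mul a)
      simpa [Function.comp_def, mul_comm] using this.hasDerivWithinAt
    have hp : HasDerivWithinAt
        (fun s => -2 * u s * u'' s + u' s ^ 2 + 2 * a * u s * u' s - a ^ 2 * u s ^ 2)
        (-2 * u' x * u'' x + -2 * u x * u''' x + 2 * u' x * u'' x
          + (2 * a * u' x * u' x + 2 * a * u x * u'' x)
          - a ^ 2 * (2 * u x * u' x)) (Set.Icc 0 1) x := by
      have h1 : HasDerivWithinAt (fun s => -2 * u s * u'' s)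
          (-2 * u' x * u'' x + -2 * u x * u''' x) (Set.Icc 0 1) x := by
        simpa [Pi.mul_def, mul_assoc, mul_comm, mul_left_comm] using
          (((hu' x hx).const_mul (-2)).mul (hu''' x hx))
      have h2 : HasDerivWithinAt (fun s => u' s ^ 2) (2 * u' x * u'' x) (Set.Icc 0 1) x := by
        simpa [Pi.mul_def, sq, mul_comm, two_mul] using ((hu'' x hx).mul (hu'' x hx)).congr_deriv (by ring)
      have h3 : HasDerivWithinAt (fun s => 2 * a * u s * u' s)
          (2 * a * u' x * u' x + 2 * a * u x * u'' x) (Set.Icc 0 1) x := by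
        simpa [Pi.mul_def, mul_assoc, mul_comm, mul_left_comm] using
          (((hu' x hx).const_mul (2 * a)).mul (hu'' x hx))
      have h4 : HasDerivWithinAt (fun s => a ^ 2 * u s ^ 2)
          (a ^ 2 * (2 * u x * u' x)) (Set.Icc 0 1) x := by
        have : HasDerivWithinAt (fun s => u s ^ 2) (2 * u x * u' x) (Set.Icc 0 1) x := by
          simpa [Pi.mul_def, sq] using ((hu' x hx).mul (hu' x hx)).congr_deriv (by ring)
        exact this.const_mul (a ^ 2)
      exact ((h1.add h2).add h3).sub h4
    have := he.mul hp
    apply this.congr_deriv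
    simp only [hf']
    ring
  have hcf' : ContinuousOn f' (Set.Icc (0:ℝ) 1) := by
    exact hce.mul ((((continuousOn_const.mul hcu).mul hcont).sub
      (continuousOn_const.mul (hcu.pow 2))).add (continuousOn_const.mul (hcu'.pow 2)))
  have hint : IntervalIntegrable f' volume 0 1 :=
    hcf'.intervalIntegrable_of_Icc (by norm_num)
  have key : (∫ s in (0:ℝ)..1, f' s) = f 1 - f 0 := by
    apply intervalIntegral.integral_eq_sub_of_hasDeriv_right_of_le (by norm_num)
    · exact hce.mul (((((continuousOn_const.mul hcu).mul hcu'').add (hcu'.pow 2)).add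
        ((continuousOn_const.mul hcu).mul hcu')).sub (continuousOn_const.mul (hcu.pow 2)))
    · intro x hx
      have hx' : x ∈ Set.Icc (0:ℝ) 1 := Set.Ioo_subset_Icc_self hx
      exact ((hderiv x hx').hasDerivAt (Icc_mem_nhds hx.1 hx.2)).hasDerivWithinAt
    · exact hint
  have hf1 : f 1 = 0 := by simp [hf, h1, h1']
  have hf0 : f 0 = u' 0 ^ 2 := by simp [hf, h0]
  have hsplit : (∫ s in (0:ℝ)..1, f' s)
      = -2 * (∫ s in (0:ℝ)..1, Real.exp ((r/2) * s) * u s * u''' s)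
        - ∫ s in (0:ℝ)..1,
            Real.exp ((r/2) * s) * ((r ^ 3 / 8) * u s ^ 2 - (3 * r / 2) * u' s ^ 2) := by
    have hi1 : IntervalIntegrable (fun s => Real.exp ((r/2) * s) * u s * u''' s) volume 0 1 := by
      apply ContinuousOn.intervalIntegrable_of_Icc (by norm_num)
      rw [← ha]
      exact (hce.mul hcu).mul hcont
    have hi2 : IntervalIntegrable (fun s =>
        Real.exp ((r/2) * s) * ((r ^ 3 / 8) * u s ^ 2 - (3 * r / 2) * u' s ^ 2)) volume 0 1 := by
      apply ContinuousOn.intervalIntegrable_of_Icc (by norm_num)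
      rw [← ha]
      exact hce.mul ((continuousOn_const.mul (hcu.pow 2)).sub
        (continuousOn_const.mul (hcu'.pow 2)))
    rw [← intervalIntegral.integral_const_mul, ← intervalIntegral.integral_sub
      (hi1.const_mul (-2)) hi2]
    apply intervalIntegral.integral_congr
    intro x hx
    simp only [hf', ha]
    ring
  have hkey2 : (∫ s in (0:ℝ)..1, f' s) = -u' 0 ^ 2 := by
    rw [key, hf1, hf0]; ring
  rw [hsplit] at hkey2
  linarith
end

section
/- Let r ≥ 0 satisfy r²·e^{r/2} ≤ 12π², and let u : ℝ → ℝ be continuously differentiable on [0,1] with u(0) = 0 and u(1) = 0. Then ∫_0^1 e^{(r/2)s}·((r³/8)·u(s)² − (3r/2)·u'(s)²) ds ≤ 0. -/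
open MeasureTheory Set Filter Real intervalIntegral
open scoped Topology

/-- boundary limit at 0: `π u(x)² cot(πx) → 0` as `x → 0⁺`, given `u(0)=0` and
differentiability from the right. -/
lemma bdry0 (u u' : ℝ → ℝ)
    (hu' : ∀ x ∈ Set.Icc (0:ℝ) 1, HasDerivWithinAt u (u' x) (Set.Icc 0 1) x)
    (h0 : u 0 = 0) :
    Tendsto (fun x => Real.pi * u x ^ 2 * (Real.cos (Real.pi * x) / Real.sin (Real.pi * x)))
      (𝓝[>] (0:ℝ)) (𝓝 0) := by
  have hslope : Tendsto (fun x => u x / x) (𝓝[>] (0:ℝ)) (𝓝 (u' 0)) := by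
    have h := (hasDerivWithinAt_iff_tendsto_slope).1 (hu' 0 ⟨le_refl 0, zero_le_one⟩)
    have hmono : 𝓝[Set.Ioo (0:ℝ) 1] 0 ≤ 𝓝[Set.Icc 0 1 \ {0}] 0 :=
      nhdsWithin_mono _ (fun x hx => ⟨⟨hx.1.le, hx.2.le⟩, ne_of_gt hx.1⟩)
    have h2 := h.mono_left hmono
    rw [nhdsWithin_Ioo_eq_nhdsGT one_pos] at h2
    refine h2.congr' ?_
    filter_upwards [self_mem_nhdsWithin] with x hx
    simp [slope, h0, div_eq_inv_mul]
  have hsin : Tendsto (fun x => Real.sin (Real.pi * x) / x) (𝓝[>] (0:ℝ)) (𝓝 Real.pi) := by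
    have hd : HasDerivAt (fun x => Real.sin (Real.pi * x)) Real.pi 0 := by
      have := (Real.hasDerivAt_sin (Real.pi * 0)).comp 0
        ((hasDerivAt_id (0:ℝ)).const_mul Real.pi)
      simpa [Function.comp_def] using this
    have h := (hasDerivWithinAt_iff_tendsto_slope).1 (hd.hasDerivWithinAt (s := Set.Ioi 0))
    have h2 := h.mono_left (nhdsWithin_mono _ (fun x hx => ⟨hx, ne_of_gt hx⟩))
    refine h2.congr' ?_
    filter_upwards [self_mem_nhdsWithin] with x hx
    simp [slope, div_eq_inv_mul]
  have hinv : Tendsto (fun x => x / Real.sin (Real.pi * x)) (𝓝[>] (0:ℝ))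
      (𝓝 (Real.pi)⁻¹) := by
    have h := hsin.inv₀ Real.pi_ne_zero
    refine h.congr (fun x => ?_)
    rw [inv_div]
  have hcc : Continuous fun x : ℝ => Real.cos (Real.pi * x) :=
    Real.continuous_cos.comp (continuous_const.mul continuous_id)
  have hcos : Tendsto (fun x => Real.cos (Real.pi * x)) (𝓝[>] (0:ℝ)) (𝓝 1) := by
    have h := hcc.tendsto 0
    simp only [mul_zero, Real.cos_zero] at h
    exact h.mono_left nhdsWithin_le_nhds
  have key : Tendsto (fun x => Real.pi * ((u x / x) ^ 2 * x) *
      ((x / Real.sin (Real.pi * x)) * Real.cos (Real.pi * x))) (𝓝[>] (0:ℝ)) (𝓝 0) := by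
    have h1 : Tendsto (fun x => (u x / x) ^ 2 * x) (𝓝[>] (0:ℝ)) (𝓝 0) := by
      have := (hslope.pow 2).mul (tendsto_id.mono_left nhdsWithin_le_nhds)
      simpa using this
    have := ((tendsto_const_nhds (x := Real.pi)).mul h1).mul (hinv.mul hcos)
    simpa using this
  refine key.congr' ?_
  filter_upwards [self_mem_nhdsWithin] with x hx
  have hx0 : (x:ℝ) ≠ 0 := ne_of_gt hx
  rcases eq_or_ne (Real.sin (Real.pi * x)) 0 with hS | hS
  · simp [hS]
  · field_simp

/-- boundary limit at 1. -/
lemma bdry1 (u u' : ℝ → ℝ)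
    (hu' : ∀ x ∈ Set.Icc (0:ℝ) 1, HasDerivWithinAt u (u' x) (Set.Icc 0 1) x)
    (h1 : u 1 = 0) :
    Tendsto (fun x => Real.pi * u x ^ 2 * (Real.cos (Real.pi * x) / Real.sin (Real.pi * x)))
      (𝓝[<] (1:ℝ)) (𝓝 0) := by
  have hslope : Tendsto (fun x => u x / (x - 1)) (𝓝[<] (1:ℝ)) (𝓝 (u' 1)) := by
    have h := (hasDerivWithinAt_iff_tendsto_slope).1 (hu' 1 ⟨zero_le_one, le_refl 1⟩)
    have hmono : 𝓝[Set.Ioo (0:ℝ) 1] 1 ≤ 𝓝[Set.Icc 0 1 \ {1}] 1 :=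
      nhdsWithin_mono _ (fun x hx => ⟨⟨hx.1.le, hx.2.le⟩, ne_of_lt hx.2⟩)
    have h2 := h.mono_left hmono
    rw [nhdsWithin_Ioo_eq_nhdsLT one_pos] at h2
    refine h2.congr' ?_
    filter_upwards [self_mem_nhdsWithin] with x hx
    simp [slope, h1, div_eq_inv_mul]
  have hsin : Tendsto (fun x => Real.sin (Real.pi * x) / (x - 1)) (𝓝[<] (1:ℝ))
      (𝓝 (-Real.pi)) := by
    have hd : HasDerivAt (fun x => Real.sin (Real.pi * x)) (-Real.pi) 1 := by
      have := (Real.hasDerivAt_sin (Real.pi * 1)).comp 1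
        ((hasDerivAt_id (1:ℝ)).const_mul Real.pi)
      simpa [Function.comp_def] using this
    have h := (hasDerivWithinAt_iff_tendsto_slope).1 (hd.hasDerivWithinAt (s := Set.Iio 1))
    have h2 := h.mono_left (nhdsWithin_mono _ (fun x hx => ⟨hx, ne_of_lt hx⟩))
    refine h2.congr' ?_
    filter_upwards [self_mem_nhdsWithin] with x hx
    simp [slope, div_eq_inv_mul]
  have hinv : Tendsto (fun x => (x - 1) / Real.sin (Real.pi * x)) (𝓝[<] (1:ℝ))
      (𝓝 (-Real.pi)⁻¹) := by
    have h := hsin.inv₀ (by simpa using Real.pi_ne_zero)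
    refine h.congr (fun x => ?_)
    rw [inv_div]
  have hcc : Continuous fun x : ℝ => Real.cos (Real.pi * x) :=
    Real.continuous_cos.comp (continuous_const.mul continuous_id)
  have hcos : Tendsto (fun x => Real.cos (Real.pi * x)) (𝓝[<] (1:ℝ)) (𝓝 (-1)) := by
    have h := hcc.tendsto 1
    simp only [mul_one, Real.cos_pi] at h
    exact h.mono_left nhdsWithin_le_nhds
  have key : Tendsto (fun x => Real.pi * ((u x / (x - 1)) ^ 2 * (x - 1)) *
      (((x - 1) / Real.sin (Real.pi * x)) * Real.cos (Real.pi * x))) (𝓝[<] (1:ℝ)) (𝓝 0) := by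
    have h1 : Tendsto (fun x => (u x / (x - 1)) ^ 2 * (x - 1)) (𝓝[<] (1:ℝ)) (𝓝 0) := by
      have hx1 : Tendsto (fun x : ℝ => x - 1) (𝓝[<] (1:ℝ)) (𝓝 0) := by
        have hc : Continuous fun x : ℝ => x - 1 := continuous_id.sub continuous_const
        have h := hc.tendsto 1
        simp only [sub_self] at h
        exact h.mono_left nhdsWithin_le_nhds
      have := (hslope.pow 2).mul hx1
      simpa using this
    have := ((tendsto_const_nhds (x := Real.pi)).mul h1).mul (hinv.mul hcos)
    simpa using this
  refine key.congr' ?_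
  filter_upwards [self_mem_nhdsWithin] with x hx
  have hx0 : x - 1 ≠ 0 := sub_ne_zero.2 (ne_of_lt hx)
  rcases eq_or_ne (Real.sin (Real.pi * x)) 0 with hS | hS
  · simp [hS]
  · field_simp

/-- Sharp Poincaré (Wirtinger) inequality on `[0,1]` with Dirichlet boundary conditions. -/
lemma poincare (u u' : ℝ → ℝ)
    (hu' : ∀ x ∈ Set.Icc (0:ℝ) 1, HasDerivWithinAt u (u' x) (Set.Icc 0 1) x)
    (hcont : ContinuousOn u' (Set.Icc 0 1))
    (h0 : u 0 = 0) (h1 : u 1 = 0) :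
    Real.pi ^ 2 * (∫ s in (0:ℝ)..1, u s ^ 2) ≤ ∫ s in (0:ℝ)..1, u' s ^ 2 := by
  have hucont : ContinuousOn u (Set.Icc (0:ℝ) 1) := fun x hx => (hu' x hx).continuousWithinAt
  set g : ℝ → ℝ := fun x =>
    Real.pi * u x ^ 2 * (Real.cos (Real.pi * x) / Real.sin (Real.pi * x)) with hgdef
  set gd : ℝ → ℝ := fun x =>
    2 * Real.pi * u x * u' x * (Real.cos (Real.pi * x) / Real.sin (Real.pi * x)) -
      Real.pi ^ 2 * u x ^ 2 / Real.sin (Real.pi * x) ^ 2 with hgddef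
  set h : ℝ → ℝ := fun x => u' x ^ 2 - Real.pi ^ 2 * u x ^ 2 with hhdef
  have hsin_pos : ∀ x ∈ Set.Ioo (0:ℝ) 1, 0 < Real.sin (Real.pi * x) := by
    intro x hx
    apply Real.sin_pos_of_pos_of_lt_pi
    · exact mul_pos Real.pi_pos hx.1
    · nlinarith [Real.pi_pos, hx.2]
  -- derivative of g
  have hderiv : ∀ x ∈ Set.Ioo (0:ℝ) 1, HasDerivAt g (gd x) x := by
    intro x hx
    have hS : Real.sin (Real.pi * x) ≠ 0 := ne_of_gt (hsin_pos x hx)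
    have hu : HasDerivAt u (u' x) x :=
      (hu' x (Set.Ioo_subset_Icc_self hx)).hasDerivAt (Icc_mem_nhds hx.1 hx.2)
    have hu2 : HasDerivAt (fun y => u y ^ 2) (2 * u x * u' x) x := by
      have := hu.pow 2
      have h' : HasDerivAt (u ^ 2) (2 * u x * u' x) x := by simpa [mul_comm, mul_assoc] using this
      exact h'
    have hsin' : HasDerivAt (fun y => Real.sin (Real.pi * y))
        (Real.pi * Real.cos (Real.pi * x)) x := by
      have hh := (Real.hasDerivAt_sin (Real.pi * x)).comp x ((hasDerivAt_id x).const_mul Real.pi)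
      have he : Real.cos (Real.pi * x) * (Real.pi * 1) = Real.pi * Real.cos (Real.pi * x) := by
        ring
      rw [he] at hh
      exact hh
    have hcos' : HasDerivAt (fun y => Real.cos (Real.pi * y))
        (-(Real.pi * Real.sin (Real.pi * x))) x := by
      have hh := (Real.hasDerivAt_cos (Real.pi * x)).comp x ((hasDerivAt_id x).const_mul Real.pi)
      have he : -Real.sin (Real.pi * x) * (Real.pi * 1) =
          -(Real.pi * Real.sin (Real.pi * x)) := by ring
      rw [he] at hh
      exact hh
    have hq : HasDerivAt (fun y => Real.cos (Real.pi * y) / Real.sin (Real.pi * y))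
        (-Real.pi / Real.sin (Real.pi * x) ^ 2) x := by
      have h2 := hcos'.div hsin' hS
      have hsc := Real.sin_sq_add_cos_sq (Real.pi * x)
      have hnum : -(Real.pi * Real.sin (Real.pi * x)) * Real.sin (Real.pi * x) -
          Real.cos (Real.pi * x) * (Real.pi * Real.cos (Real.pi * x)) = -Real.pi := by
        linear_combination (-Real.pi) * hsc
      rw [hnum] at h2
      exact h2
    have hprod := (hu2.mul hq).const_mul Real.pi
    have hfun : g = fun y =>
        Real.pi * (u y ^ 2 * (Real.cos (Real.pi * y) / Real.sin (Real.pi * y))) := by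
      funext y
      rw [hgdef]
      ring
    rw [hfun]
    refine hprod.congr_deriv ?_
    rw [hgddef]
    field_simp
    ring
  -- pointwise inequality gd ≤ h
  have hgle : ∀ x ∈ Set.Ioo (0:ℝ) 1, gd x ≤ h x := by
    intro x hx
    have hSpos := hsin_pos x hx
    have hS : Real.sin (Real.pi * x) ≠ 0 := ne_of_gt hSpos
    have hsc := Real.sin_sq_add_cos_sq (Real.pi * x)
    have e1 : gd x = (2 * Real.pi * u x * u' x * Real.cos (Real.pi * x) *
        Real.sin (Real.pi * x) - Real.pi ^ 2 * u x ^ 2) / Real.sin (Real.pi * x) ^ 2 := by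
      rw [hgddef]
      field_simp
    have e2 : h x = (u' x ^ 2 * Real.sin (Real.pi * x) ^ 2 -
        Real.pi ^ 2 * u x ^ 2 * Real.sin (Real.pi * x) ^ 2) / Real.sin (Real.pi * x) ^ 2 := by
      rw [hhdef]
      field_simp
    rw [e1, e2, div_le_div_iff_of_pos_right (by positivity)]
    have hsc2 : Real.pi ^ 2 * u x ^ 2 * Real.sin (Real.pi * x) ^ 2 +
        Real.pi ^ 2 * u x ^ 2 * Real.cos (Real.pi * x) ^ 2 = Real.pi ^ 2 * u x ^ 2 := by
      linear_combination (Real.pi ^ 2 * u x ^ 2) * hsc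
    nlinarith [sq_nonneg (u' x * Real.sin (Real.pi * x) -
      Real.pi * u x * Real.cos (Real.pi * x)), hsc2]
  -- continuity facts
  have hcont_h : ContinuousOn h (Set.Icc (0:ℝ) 1) :=
    (hcont.pow 2).sub (continuousOn_const.mul (hucont.pow 2))
  have hint_h : ∀ a b : ℝ, a ∈ Set.Icc (0:ℝ) 1 → b ∈ Set.Icc (0:ℝ) 1 →
      IntervalIntegrable h volume a b := by
    intro a b ha hb
    apply ContinuousOn.intervalIntegrable
    exact hcont_h.mono (Set.uIcc_subset_Icc ha hb)
  -- the key inequality for each small ε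
  have key : ∀ ε ∈ Set.Ioo (0:ℝ) (1/2),
      g (1 - ε) - g ε ≤ ∫ s in ε..(1 - ε), h s := by
    intro ε hε
    have hab : ε ≤ 1 - ε := by linarith [hε.2]
    have hsub : Set.Icc ε (1 - ε) ⊆ Set.Ioo (0:ℝ) 1 := by
      intro x hx
      exact ⟨lt_of_lt_of_le hε.1 hx.1, lt_of_le_of_lt hx.2 (by linarith [hε.1])⟩
    have hsub' : Set.Icc ε (1 - ε) ⊆ Set.Icc (0:ℝ) 1 :=
      hsub.trans Set.Ioo_subset_Icc_self
    have hgd_cont : ContinuousOn gd (Set.Icc ε (1 - ε)) := by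
      have hSne : ∀ x ∈ Set.Icc ε (1 - ε), Real.sin (Real.pi * x) ≠ 0 :=
        fun x hx => ne_of_gt (hsin_pos x (hsub hx))
      have hsinC : ContinuousOn (fun x => Real.sin (Real.pi * x)) (Set.Icc ε (1 - ε)) :=
        (Real.continuous_sin.comp (continuous_const.mul continuous_id)).continuousOn
      have hcosC : ContinuousOn (fun x => Real.cos (Real.pi * x)) (Set.Icc ε (1 - ε)) :=
        (Real.continuous_cos.comp (continuous_const.mul continuous_id)).continuousOn
      apply ContinuousOn.sub
      · exact ((continuousOn_const.mul (hucont.mono hsub')).mul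
          (hcont.mono hsub')).mul (hcosC.div hsinC hSne)
      · exact (continuousOn_const.mul ((hucont.mono hsub').pow 2)).div (hsinC.pow 2)
          (fun x hx => pow_ne_zero 2 (hSne x hx))
    have hgd_int : IntervalIntegrable gd volume ε (1 - ε) := by
      apply ContinuousOn.intervalIntegrable
      rwa [Set.uIcc_of_le hab]
    have hftc : (∫ s in ε..(1 - ε), gd s) = g (1 - ε) - g ε := by
      apply intervalIntegral.integral_eq_sub_of_hasDerivAt
      · intro t ht
        rw [Set.uIcc_of_le hab] at ht
        exact hderiv t (hsub ht)
      · exact hgd_int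
    rw [← hftc]
    apply intervalIntegral.integral_mono_on hab hgd_int
      (hint_h ε (1 - ε) (hsub' ⟨le_refl _, hab⟩) (hsub' ⟨hab, le_refl _⟩))
    intro x hx
    exact hgle x (hsub hx)
  -- bound for h
  obtain ⟨M, hM⟩ := (isCompact_Icc (a := (0:ℝ)) (b := 1)).exists_bound_of_continuousOn hcont_h
  -- limits
  have hL : Filter.Tendsto (fun ε => g (1 - ε) - g ε) (𝓝[>] (0:ℝ)) (𝓝 0) := by
    have hmap : Filter.Tendsto (fun ε : ℝ => 1 - ε) (𝓝[>] (0:ℝ)) (𝓝[<] (1:ℝ)) := by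
      apply tendsto_nhdsWithin_of_tendsto_nhds_of_eventually_within
      · have hc : Continuous fun ε : ℝ => 1 - ε := continuous_const.sub continuous_id
        have := hc.tendsto 0
        simp only [sub_zero] at this
        exact this.mono_left nhdsWithin_le_nhds
      · filter_upwards [self_mem_nhdsWithin] with ε hε
        simp only [Set.mem_Iio]
        linarith [Set.mem_Ioi.1 hε]
    have h1 := (bdry1 u u' hu' h1).comp hmap
    have h0' := bdry0 u u' hu' h0
    have := h1.sub h0'
    simpa using this
  have htail0 : Filter.Tendsto (fun ε => ∫ s in (0:ℝ)..ε, h s) (𝓝[>] (0:ℝ)) (𝓝 0) := by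
    apply squeeze_zero_norm' (a := fun ε => M * ε)
    · filter_upwards [Ioo_mem_nhdsGT_of_mem
        (Set.mem_Ico.2 ⟨le_refl (0:ℝ), one_half_pos⟩)] with ε hε
      have hb : ∀ x ∈ Set.uIoc (0:ℝ) ε, ‖h x‖ ≤ M := by
        intro x hx
        rw [Set.uIoc_of_le hε.1.le] at hx
        exact hM x ⟨hx.1.le, hx.2.trans (by linarith [hε.2])⟩
      have := intervalIntegral.norm_integral_le_of_norm_le_const hb
      rwa [sub_zero, abs_of_pos hε.1] at this
    · have hc : Continuous fun ε : ℝ => M * ε := continuous_const.mul continuous_id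
      have := hc.tendsto 0
      simp only [mul_zero] at this
      exact this.mono_left nhdsWithin_le_nhds
  have htail1 : Filter.Tendsto (fun ε => ∫ s in (1 - ε)..1, h s) (𝓝[>] (0:ℝ)) (𝓝 0) := by
    apply squeeze_zero_norm' (a := fun ε => M * ε)
    · filter_upwards [Ioo_mem_nhdsGT_of_mem
        (Set.mem_Ico.2 ⟨le_refl (0:ℝ), one_half_pos⟩)] with ε hε
      have hb : ∀ x ∈ Set.uIoc (1 - ε) 1, ‖h x‖ ≤ M := by
        intro x hx
        rw [Set.uIoc_of_le (by linarith [hε.1] : 1 - ε ≤ 1)] at hx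
        exact hM x ⟨by linarith [hx.1, hε.2], hx.2⟩
      have := intervalIntegral.norm_integral_le_of_norm_le_const hb
      rwa [show (1:ℝ) - (1 - ε) = ε by ring, abs_of_pos hε.1] at this
    · have hc : Continuous fun ε : ℝ => M * ε := continuous_const.mul continuous_id
      have := hc.tendsto 0
      simp only [mul_zero] at this
      exact this.mono_left nhdsWithin_le_nhds
  have hR : Filter.Tendsto (fun ε => ∫ s in ε..(1 - ε), h s) (𝓝[>] (0:ℝ))
      (𝓝 (∫ s in (0:ℝ)..1, h s)) := by
    have heq : ∀ ε ∈ Set.Ioo (0:ℝ) (1/2),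
        (∫ s in ε..(1 - ε), h s) =
          (∫ s in (0:ℝ)..1, h s) - (∫ s in (0:ℝ)..ε, h s) - ∫ s in (1 - ε)..1, h s := by
      intro ε hε
      have h1mem : (1 - ε) ∈ Set.Icc (0:ℝ) 1 := ⟨by linarith [hε.2], by linarith [hε.1]⟩
      have hεmem : ε ∈ Set.Icc (0:ℝ) 1 := ⟨hε.1.le, by linarith [hε.2]⟩
      have e1 := intervalIntegral.integral_add_adjacent_intervals
        (hint_h 0 ε ⟨le_refl _, zero_le_one⟩ hεmem) (hint_h ε (1 - ε) hεmem h1mem)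
      have e2 := intervalIntegral.integral_add_adjacent_intervals
        (hint_h 0 (1 - ε) ⟨le_refl _, zero_le_one⟩ h1mem)
        (hint_h (1 - ε) 1 h1mem ⟨zero_le_one, le_refl _⟩)
      linarith [e1, e2]
    have hlim : Filter.Tendsto (fun ε =>
        (∫ s in (0:ℝ)..1, h s) - (∫ s in (0:ℝ)..ε, h s) - ∫ s in (1 - ε)..1, h s)
        (𝓝[>] (0:ℝ)) (𝓝 (∫ s in (0:ℝ)..1, h s)) := by
      have := ((tendsto_const_nhds (x := ∫ s in (0:ℝ)..1, h s)
        (f := 𝓝[>] (0:ℝ))).sub htail0).sub htail1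
      simpa using this
    refine hlim.congr' ?_
    filter_upwards [Ioo_mem_nhdsGT_of_mem
      (Set.mem_Ico.2 ⟨le_refl (0:ℝ), one_half_pos⟩)] with ε hε
    exact (heq ε hε).symm
  -- conclude 0 ≤ ∫ h
  have hmain : (0:ℝ) ≤ ∫ s in (0:ℝ)..1, h s := by
    apply le_of_tendsto_of_tendsto hL hR
    filter_upwards [Ioo_mem_nhdsGT_of_mem
      (Set.mem_Ico.2 ⟨le_refl (0:ℝ), one_half_pos⟩)] with ε hε
    exact key ε hε
  have hIu : IntervalIntegrable (fun s => u s ^ 2) volume 0 1 :=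
    ((hucont.pow 2).mono (by rw [Set.uIcc_of_le zero_le_one])).intervalIntegrable
  have hIu' : IntervalIntegrable (fun s => u' s ^ 2) volume 0 1 :=
    ((hcont.pow 2).mono (by rw [Set.uIcc_of_le zero_le_one])).intervalIntegrable
  have hsplit : (∫ s in (0:ℝ)..1, h s) =
      (∫ s in (0:ℝ)..1, u' s ^ 2) - Real.pi ^ 2 * ∫ s in (0:ℝ)..1, u s ^ 2 := by
    rw [hhdef]
    rw [intervalIntegral.integral_sub hIu' (hIu.const_mul _),
      intervalIntegral.integral_const_mul]
  linarith [hmain, hsplit.symm.le, hsplit.le]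

theorem KdV_conservative_stability_bound (r : ℝ) (hr : 0 ≤ r)
    (hrbound : r ^ 2 * Real.exp (r / 2) ≤ 12 * Real.pi ^ 2)
    (u u' : ℝ → ℝ)
    (hu' : ∀ x ∈ Set.Icc (0:ℝ) 1, HasDerivWithinAt u (u' x) (Set.Icc 0 1) x)
    (hcont : ContinuousOn u' (Set.Icc 0 1))
    (h0 : u 0 = 0) (h1 : u 1 = 0) :
    (∫ s in (0:ℝ)..1,
      Real.exp ((r/2) * s) * ((r ^ 3 / 8) * u s ^ 2 - (3 * r / 2) * u' s ^ 2)) ≤ 0 := by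
  have hucont : ContinuousOn u (Set.Icc (0:ℝ) 1) :=
    fun x hx => (hu' x hx).continuousWithinAt
  have hP := poincare u u' hu' hcont h0 h1
  -- integrability
  have hIu : IntervalIntegrable (fun s => u s ^ 2) volume 0 1 :=
    ((hucont.pow 2).mono (by rw [Set.uIcc_of_le zero_le_one])).intervalIntegrable
  have hIu' : IntervalIntegrable (fun s => u' s ^ 2) volume 0 1 :=
    ((hcont.pow 2).mono (by rw [Set.uIcc_of_le zero_le_one])).intervalIntegrable
  have hIL : IntervalIntegrable (fun s =>
      Real.exp ((r/2) * s) * ((r ^ 3 / 8) * u s ^ 2 - (3 * r / 2) * u' s ^ 2)) volume 0 1 := by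
    apply ContinuousOn.intervalIntegrable
    rw [Set.uIcc_of_le zero_le_one]
    exact ((Real.continuous_exp.comp (continuous_const.mul continuous_id)).continuousOn).mul
      (((continuousOn_const.mul (hucont.pow 2))).sub (continuousOn_const.mul (hcont.pow 2)))
  have hIR : IntervalIntegrable (fun s =>
      Real.exp (r/2) * (r ^ 3 / 8) * u s ^ 2 - (3 * r / 2) * u' s ^ 2) volume 0 1 :=
    (hIu.const_mul _).sub (hIu'.const_mul _)
  have hmono : (∫ s in (0:ℝ)..1,
      Real.exp ((r/2) * s) * ((r ^ 3 / 8) * u s ^ 2 - (3 * r / 2) * u' s ^ 2)) ≤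
      ∫ s in (0:ℝ)..1, Real.exp (r/2) * (r ^ 3 / 8) * u s ^ 2 - (3 * r / 2) * u' s ^ 2 := by
    apply intervalIntegral.integral_mono_on zero_le_one hIL hIR
    intro s hs
    have he1 : Real.exp ((r/2) * s) ≤ Real.exp (r/2) := by
      apply Real.exp_le_exp.2
      nlinarith [hs.1, hs.2]
    have he2 : (1:ℝ) ≤ Real.exp ((r/2) * s) := by
      rw [← Real.exp_zero]
      apply Real.exp_le_exp.2
      nlinarith [hs.1, hs.2]
    have h₁ : (0:ℝ) ≤ r ^ 3 / 8 * u s ^ 2 := by positivity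
    have h₂ : (0:ℝ) ≤ 3 * r / 2 * u' s ^ 2 := by positivity
    nlinarith [mul_le_mul_of_nonneg_right he1 h₁, le_mul_of_one_le_left h₂ he2]
  have hsplit : (∫ s in (0:ℝ)..1,
      Real.exp (r/2) * (r ^ 3 / 8) * u s ^ 2 - (3 * r / 2) * u' s ^ 2) =
      Real.exp (r/2) * (r ^ 3 / 8) * (∫ s in (0:ℝ)..1, u s ^ 2) -
      (3 * r / 2) * (∫ s in (0:ℝ)..1, u' s ^ 2) := by
    rw [intervalIntegral.integral_sub (hIu.const_mul _) (hIu'.const_mul _),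
      intervalIntegral.integral_const_mul, intervalIntegral.integral_const_mul]
  have hA : 0 ≤ ∫ s in (0:ℝ)..1, u s ^ 2 :=
    intervalIntegral.integral_nonneg zero_le_one (fun s _ => sq_nonneg _)
  have hexp : 0 < Real.exp (r/2) := Real.exp_pos _
  refine hmono.trans ?_
  rw [hsplit]
  nlinarith [mul_nonneg hr hA, mul_nonneg (mul_nonneg hr hr) hA,
    mul_le_mul_of_nonneg_right hrbound (mul_nonneg hr hA)]
end

section
/- Let r ∈ ℝ and let u : ℝ → ℝ be four times continuously differentiable on [0,1] with u(0) = 0, u(1) = 0, u'(0) = 0, and u'(1) = 0. Then −∫_0^1 e^{3rs}·u(s)·u''''(s) ds = ∫_0^1 e^{3rs}·(−(81r⁴/2)·u(s)² + 18r²·u'(s)² − u''(s)²) ds. -/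
open MeasureTheory

theorem KSE_fourth_order_integration_by_parts (r : ℝ) (u u' u'' u''' u'''' : ℝ → ℝ)
    (hu' : ∀ x ∈ Set.Icc (0:ℝ) 1, HasDerivWithinAt u (u' x) (Set.Icc 0 1) x)
    (hu'' : ∀ x ∈ Set.Icc (0:ℝ) 1, HasDerivWithinAt u' (u'' x) (Set.Icc 0 1) x)
    (hu''' : ∀ x ∈ Set.Icc (0:ℝ) 1, HasDerivWithinAt u'' (u''' x) (Set.Icc 0 1) x)
    (hu'''' : ∀ x ∈ Set.Icc (0:ℝ) 1, HasDerivWithinAt u''' (u'''' x) (Set.Icc 0 1) x)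
    (hcont : ContinuousOn u'''' (Set.Icc 0 1))
    (h0 : u 0 = 0) (h1 : u 1 = 0) (h0' : u' 0 = 0) (h1' : u' 1 = 0) :
    (-∫ s in (0:ℝ)..1, Real.exp (3 * r * s) * u s * u'''' s)
    = ∫ s in (0:ℝ)..1,
        Real.exp (3 * r * s)
          * (-(81 * r ^ 4 / 2) * u s ^ 2 + 18 * r ^ 2 * u' s ^ 2 - u'' s ^ 2) := by
  have hcu : ContinuousOn u (Set.Icc 0 1) := fun x hx => (hu' x hx).continuousWithinAt
  have hcu' : ContinuousOn u' (Set.Icc 0 1) := fun x hx => (hu'' x hx).continuousWithinAt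
  have hcu'' : ContinuousOn u'' (Set.Icc 0 1) := fun x hx => (hu''' x hx).continuousWithinAt
  have hcu''' : ContinuousOn u''' (Set.Icc 0 1) := fun x hx => (hu'''' x hx).continuousWithinAt
  have hce : ContinuousOn (fun s => Real.exp (3 * r * s)) (Set.Icc (0:ℝ) 1) :=
    (Real.continuous_exp.comp (continuous_const.mul continuous_id)).continuousOn
  set F : ℝ → ℝ := fun s => Real.exp (3 * r * s) *
      (u s * u''' s - u' s * u'' s - (3 * r) * (u s * u'' s) + (3 * r) * (u' s) ^ 2
        + (3 * r) ^ 2 * (u s * u' s) - (3 * r) ^ 3 / 2 * (u s) ^ 2) with hFdef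
  set G : ℝ → ℝ := fun s => Real.exp (3 * r * s) * u s * u'''' s
      + Real.exp (3 * r * s)
          * (-(81 * r ^ 4 / 2) * u s ^ 2 + 18 * r ^ 2 * u' s ^ 2 - u'' s ^ 2) with hGdef
  have hderiv : ∀ x ∈ Set.Icc (0:ℝ) 1, HasDerivWithinAt F (G x) (Set.Icc 0 1) x := by
    intro x hx
    have he : HasDerivWithinAt (fun s => Real.exp (3 * r * s))
        (3 * r * Real.exp (3 * r * x)) (Set.Icc 0 1) x := by
      have h := (((hasDerivAt_id x).const_mul (3 * r)).exp).hasDerivWithinAt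
        (s := Set.Icc (0:ℝ) 1)
      simpa [mul_comm] using h
    have hd1 := (hu' x hx).mul (hu'''' x hx)
    have hd2 := (hu'' x hx).mul (hu''' x hx)
    have hd3 := ((hu' x hx).mul (hu''' x hx)).const_mul (3 * r)
    have hd4 := ((hu'' x hx).pow 2).const_mul (3 * r)
    have hd5 := ((hu' x hx).mul (hu'' x hx)).const_mul ((3 * r) ^ 2)
    have hd6 := ((hu' x hx).pow 2).const_mul ((3 * r) ^ 3 / 2)
    have hin := ((((hd1.sub hd2).sub hd3).add hd4).add hd5).sub hd6
    have h := he.mul hin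
    convert h using 1
    · rfl
    · rfl
    · rfl
    simp only [hGdef, Pi.add_apply, Pi.sub_apply, Pi.mul_apply, Pi.pow_apply]
    ring
  have hFcont : ContinuousOn F (Set.Icc 0 1) := fun x hx => (hderiv x hx).continuousWithinAt
  have hGcont : ContinuousOn G (Set.Icc (0:ℝ) 1) := by
    simp only [hGdef]
    exact ((hce.mul hcu).mul hcont).add (hce.mul
      ((((continuousOn_const.mul (hcu.pow 2)).add
        (continuousOn_const.mul (hcu'.pow 2)))).sub (hcu''.pow 2)))
  have hGint : IntervalIntegrable G volume 0 1 := by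
    apply hGcont.intervalIntegrable_of_Icc (by norm_num)
  have hint : ∫ s in (0:ℝ)..1, G s = F 1 - F 0 := by
    apply intervalIntegral.integral_eq_sub_of_hasDeriv_right_of_le (by norm_num) hFcont
    · intro x hx
      exact ((hderiv x ⟨hx.1.le, hx.2.le⟩).hasDerivAt
        (Icc_mem_nhds hx.1 hx.2)).hasDerivWithinAt
    · exact hGint
  have hF0 : F 0 = 0 := by simp [hFdef, h0, h0']
  have hF1 : F 1 = 0 := by simp [hFdef, h1, h1']
  have hf1int : IntervalIntegrable (fun s => Real.exp (3 * r * s) * u s * u'''' s)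
      volume 0 1 :=
    ((hce.mul hcu).mul hcont).intervalIntegrable_of_Icc (by norm_num)
  have hf2int : IntervalIntegrable (fun s => Real.exp (3 * r * s)
      * (-(81 * r ^ 4 / 2) * u s ^ 2 + 18 * r ^ 2 * u' s ^ 2 - u'' s ^ 2)) volume 0 1 :=
    (hce.mul ((((continuousOn_const.mul (hcu.pow 2)).add
      (continuousOn_const.mul (hcu'.pow 2)))).sub
      (hcu''.pow 2))).intervalIntegrable_of_Icc (by norm_num)
  have hsplit : ∫ s in (0:ℝ)..1, G s
      = (∫ s in (0:ℝ)..1, Real.exp (3 * r * s) * u s * u'''' s)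
        + ∫ s in (0:ℝ)..1, Real.exp (3 * r * s)
            * (-(81 * r ^ 4 / 2) * u s ^ 2 + 18 * r ^ 2 * u' s ^ 2 - u'' s ^ 2) := by
    rw [hGdef]
    exact intervalIntegral.integral_add hf1int hf2int
  rw [hint, hF0, hF1] at hsplit
  linarith
end

section
/- Let r ≥ 0 satisfy e^{3r}·(18r² + 1) ≤ π², and let u : ℝ → ℝ be twice continuously differentiable on [0,1] with u(0) = 0, u(1) = 0, u'(0) = 0, and u'(1) = 0. Then ∫_0^1 e^{3rs}·(−9r²·(9r² + 1)·u(s)² + (36r² + 2)·u'(s)² − 2·u''(s)²) ds ≤ 0. -/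
open MeasureTheory Set Filter Topology intervalIntegral Real

lemma my_wirtinger (f f' : ℝ → ℝ)
    (hf : ∀ x ∈ Set.Icc (0:ℝ) 1, HasDerivWithinAt f (f' x) (Set.Icc 0 1) x)
    (hc : ContinuousOn f' (Set.Icc 0 1))
    (h0 : f 0 = 0) (h1 : f 1 = 0) :
    π ^ 2 * ∫ s in (0:ℝ)..1, f s ^ 2 ≤ ∫ s in (0:ℝ)..1, f' s ^ 2 := by
  have hfc : ContinuousOn f (Set.Icc 0 1) := fun x hx => (hf x hx).continuousWithinAt
  set φ : ℝ → ℝ := fun s => f' s ^ 2 - π ^ 2 * f s ^ 2 with hφ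
  have hφc : ContinuousOn φ (Set.Icc 0 1) :=
    (hc.pow 2).sub (continuousOn_const.mul (hfc.pow 2))
  -- reduce to 0 ≤ ∫ φ
  have hφint : ∀ a b : ℝ, a ∈ Set.Icc (0:ℝ) 1 → b ∈ Set.Icc (0:ℝ) 1 →
      IntervalIntegrable φ volume a b := by
    intro a b ha hb
    exact (hφc.mono (Set.uIcc_subset_Icc ha hb)).intervalIntegrable
  set F : ℝ → ℝ := fun x => ∫ s in (0:ℝ)..x, φ s with hF
  have hFc : ContinuousOn F (Set.Icc 0 1) := by
    have := continuousOn_primitive_interval (f := φ) (a := (0:ℝ)) (b := 1) (μ := volume)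
      (by rw [Set.uIcc_of_le zero_le_one]; exact hφc.integrableOn_compact isCompact_Icc)
    rwa [Set.uIcc_of_le zero_le_one] at this
  suffices h : 0 ≤ F 1 by
    have : F 1 = (∫ s in (0:ℝ)..1, f' s ^ 2) - π ^ 2 * ∫ s in (0:ℝ)..1, f s ^ 2 := by
      have e1 : IntervalIntegrable (fun s => f' s ^ 2) volume 0 1 :=
        ((hc.pow 2).mono (by rw [Set.uIcc_of_le zero_le_one])).intervalIntegrable
      have e2 : IntervalIntegrable (fun s => π ^ 2 * f s ^ 2) volume 0 1 :=
        (continuousOn_const.mul ((hfc.pow 2).mono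
          (by rw [Set.uIcc_of_le zero_le_one]))).intervalIntegrable
      simp only [hF, hφ]
      rw [intervalIntegral.integral_sub e1 e2, intervalIntegral.integral_const_mul]
    linarith [this ▸ h]
  set g : ℝ → ℝ := fun s => π * f s ^ 2 * (Real.cos (π * s) / Real.sin (π * s)) with hg
  -- the key inequality on interior intervals
  have key : ∀ ε ∈ Set.Ioo (0:ℝ) (1/2), g (1 - ε) - g ε ≤ F (1 - ε) - F ε := by
    intro ε hε
    obtain ⟨hε0, hε2⟩ := hε
    have hab : ε ≤ 1 - ε := by linarith
    have hmem : Set.Icc ε (1-ε) ⊆ Set.Icc (0:ℝ) 1 := Set.Icc_subset_Icc (by linarith) (by linarith)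
    have hsin : ∀ s ∈ Set.Icc ε (1-ε), 0 < Real.sin (π * s) := by
      intro s hs
      apply Real.sin_pos_of_pos_of_lt_pi
      · exact mul_pos Real.pi_pos (lt_of_lt_of_le hε0 hs.1)
      · nlinarith [Real.pi_pos, hs.2]
    set h : ℝ → ℝ := fun s => 2 * π * f s * f' s * (Real.cos (π * s) / Real.sin (π * s))
        - π ^ 2 * f s ^ 2 / Real.sin (π * s) ^ 2 with hh
    have hgd : ∀ s ∈ Set.Icc ε (1-ε), HasDerivAt g (h s) s := by
      intro s hs
      have hσ : Real.sin (π * s) ≠ 0 := (hsin s hs).ne'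
      have hnb : Set.Icc (0:ℝ) 1 ∈ 𝓝 s :=
        Icc_mem_nhds (lt_of_lt_of_le hε0 hs.1) (by linarith [hs.2])
      have hfs : HasDerivAt f (f' s) s := ((hf s (hmem hs)).hasDerivAt hnb)
      have hps : HasDerivAt (fun x : ℝ => π * x) π s := by
        simpa using (hasDerivAt_id s).const_mul π
      have hcos : HasDerivAt (fun x : ℝ => Real.cos (π * x)) (-Real.sin (π * s) * π) s :=
        hps.cos
      have hsinD : HasDerivAt (fun x : ℝ => Real.sin (π * x)) (Real.cos (π * s) * π) s :=
        hps.sin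
      have hquot : HasDerivAt (fun x : ℝ => Real.cos (π * x) / Real.sin (π * x))
          ((-Real.sin (π * s) * π * Real.sin (π * s) -
            Real.cos (π * s) * (Real.cos (π * s) * π)) / Real.sin (π * s) ^ 2) s :=
        hcos.div hsinD hσ
      have hsq : HasDerivAt (fun x : ℝ => π * f x ^ 2) (π * (2 * f s * f' s)) s := by
        simpa [mul_comm, mul_assoc, mul_left_comm] using (hfs.pow 2).const_mul π
      have := hsq.mul hquot
      refine this.congr_deriv ?_
      have hpyth := Real.sin_sq_add_cos_sq (π * s)
      have hRw : -Real.sin (π*s) * π * Real.sin (π*s) - Real.cos (π*s) * (Real.cos (π*s) * π)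
          = -π := by linear_combination (-π : ℝ) * hpyth
      rw [hRw, hh]
      field_simp
      ring
    have hhc : ContinuousOn h (Set.Icc ε (1-ε)) := by
      have hcc : ContinuousOn (fun s => Real.cos (π * s)) (Set.Icc ε (1-ε)) :=
        (Real.continuous_cos.comp (continuous_const.mul continuous_id)).continuousOn
      have hsc : ContinuousOn (fun s => Real.sin (π * s)) (Set.Icc ε (1-ε)) :=
        (Real.continuous_sin.comp (continuous_const.mul continuous_id)).continuousOn
      exact ((continuousOn_const.mul (hfc.mono hmem)).mul (hc.mono hmem)).mul
          (hcc.div hsc fun s hs => (hsin s hs).ne') |>.sub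
        ((continuousOn_const.mul ((hfc.mono hmem).pow 2)).div (hsc.pow 2)
          fun s hs => pow_ne_zero _ (hsin s hs).ne')
    have hftc : ∫ s in ε..(1-ε), h s = g (1-ε) - g ε := by
      apply intervalIntegral.integral_eq_sub_of_hasDerivAt
      · intro s hs
        rw [Set.uIcc_of_le hab] at hs
        exact hgd s hs
      · exact (hhc.mono (by rw [Set.uIcc_of_le hab])).intervalIntegrable
    have hFdiff : F (1-ε) - F ε = ∫ s in ε..(1-ε), φ s := by
      have := intervalIntegral.integral_add_adjacent_intervals
        (hφint 0 ε ⟨le_refl _, zero_le_one⟩ ⟨hε0.le, by linarith⟩)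
        (hφint ε (1-ε) ⟨hε0.le, by linarith⟩ ⟨by linarith, by linarith⟩)
      simp only [hF]; rw [← this]; ring
    rw [hFdiff, ← hftc]
    apply intervalIntegral.integral_mono_on hab
      ((hhc.mono (by rw [Set.uIcc_of_le hab] : Set.uIcc ε (1-ε) ⊆ _)).intervalIntegrable)
      ((hφc.mono ((Set.uIcc_of_le hab) ▸ hmem)).intervalIntegrable)
    intro s hs
    have hσ : (0:ℝ) < Real.sin (π * s) := hsin s hs
    have hpyth := Real.sin_sq_add_cos_sq (π * s)
    have hkey : (φ s - h s) * Real.sin (π * s) ^ 2 =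
        (f' s * Real.sin (π * s) - π * f s * Real.cos (π * s)) ^ 2 := by
      simp only [hφ, hh]
      have e1 : Real.cos (π * s) / Real.sin (π * s) * Real.sin (π * s) ^ 2
          = Real.cos (π * s) * Real.sin (π * s) := by
        rw [pow_two, ← mul_assoc, div_mul_cancel₀ _ hσ.ne']
      have e2 : π ^ 2 * f s ^ 2 / Real.sin (π * s) ^ 2 * Real.sin (π * s) ^ 2
          = π ^ 2 * f s ^ 2 := by
        rw [div_mul_cancel₀ _ (pow_ne_zero 2 hσ.ne')]
      linear_combination (-2 * π * f s * f' s) * e1 + e2 - π ^ 2 * f s ^ 2 * hpyth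
    by_contra hcon
    push_neg at hcon
    have h2 : 0 ≤ (φ s - h s) * Real.sin (π * s) ^ 2 := hkey ▸ sq_nonneg _
    have h3 : (φ s - h s) * Real.sin (π * s) ^ 2 < 0 :=
      mul_neg_of_neg_of_pos (by linarith) (pow_pos hσ 2)
    linarith
  -- limits along l = 𝓝[Ioo 0 (1/2)] 0
  set l : Filter ℝ := 𝓝[Set.Ioo (0:ℝ) (1/2)] 0 with hl
  haveI : l.NeBot := left_nhdsWithin_Ioo_neBot (by norm_num)
  have hIooIcc : Set.Ioo (0:ℝ) (1/2) ⊆ Set.Icc (0:ℝ) 1 :=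
    Set.Ioo_subset_Icc_self.trans (Set.Icc_subset_Icc le_rfl (by norm_num))
  have hEv : ∀ᶠ ε in l, ε ∈ Set.Ioo (0:ℝ) (1/2) := self_mem_nhdsWithin
  have hidl : Tendsto (fun ε : ℝ => ε) l (𝓝 0) := tendsto_id.mono_left nhdsWithin_le_nhds
  -- slope limit at 0
  have hs0 : Tendsto (fun ε => f ε / ε) l (𝓝 (f' 0)) := by
    have hd := (hf 0 ⟨le_rfl, zero_le_one⟩)
    rw [hasDerivWithinAt_iff_tendsto_slope] at hd
    have hmono : l ≤ 𝓝[Set.Icc (0:ℝ) 1 \ {0}] 0 :=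
      nhdsWithin_mono _ (fun x hx => ⟨hIooIcc hx, by simp [hx.1.ne']⟩)
    refine Tendsto.congr' ?_ (hd.mono_left hmono)
    filter_upwards [hEv] with ε hε
    simp [slope_def_field, h0]
  -- slope limit at 1
  have hm1 : Tendsto (fun ε : ℝ => 1 - ε) l (𝓝[Set.Icc (0:ℝ) 1 \ {1}] 1) := by
    rw [tendsto_nhdsWithin_iff]
    constructor
    · have : Tendsto (fun ε : ℝ => 1 - ε) l (𝓝 (1 - 0)) := tendsto_const_nhds.sub hidl
      simpa using this
    · filter_upwards [hEv] with ε hε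
      refine ⟨⟨by linarith [hε.2], by linarith [hε.1]⟩, ?_⟩
      simp only [Set.mem_singleton_iff]
      intro hcon
      linarith [hε.1, sub_eq_self.mp hcon]
  have hs1 : Tendsto (fun ε => f (1 - ε) / ε) l (𝓝 (-(f' 1))) := by
    have hd := (hf 1 ⟨zero_le_one, le_rfl⟩)
    rw [hasDerivWithinAt_iff_tendsto_slope] at hd
    have := (hd.comp hm1).neg
    refine Tendsto.congr' ?_ this
    filter_upwards [hEv] with ε hε
    have hεne : ε ≠ 0 := hε.1.ne'
    simp only [Function.comp_apply, slope_def_field, h1]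
    rw [sub_zero, show (1 - ε - 1 : ℝ) = -ε by ring, div_neg, neg_neg]
  -- limit of g at 0 (squeeze)
  have T1 : Tendsto (fun ε => g ε) l (𝓝 0) := by
    have hbnd : Tendsto (fun ε => π / 2 * (f ε / ε) ^ 2 * ε) l (𝓝 0) := by
      have := ((tendsto_const_nhds (x := π / 2)).mul (hs0.pow 2)).mul hidl
      simpa using this
    refine tendsto_of_tendsto_of_tendsto_of_le_of_le' tendsto_const_nhds hbnd ?_ ?_
    · filter_upwards [hEv] with ε hε
      have hσ : 0 < Real.sin (π * ε) :=
        Real.sin_pos_of_pos_of_lt_pi (mul_pos Real.pi_pos hε.1)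
          (by nlinarith [Real.pi_pos, hε.2])
      have hcn : 0 ≤ Real.cos (π * ε) := by
        apply Real.cos_nonneg_of_mem_Icc
        constructor
        · nlinarith [Real.pi_pos, hε.1]
        · nlinarith [Real.pi_pos, hε.2]
      simp only [hg]
      positivity
    · filter_upwards [hEv] with ε hε
      have hσ : 0 < Real.sin (π * ε) :=
        Real.sin_pos_of_pos_of_lt_pi (mul_pos Real.pi_pos hε.1)
          (by nlinarith [Real.pi_pos, hε.2])
      have h2ε : 2 * ε ≤ Real.sin (π * ε) := by
        have := Real.mul_le_sin (x := π * ε) (mul_nonneg Real.pi_pos.le hε.1.le)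
          (by nlinarith [Real.pi_pos, hε.2])
        calc 2 * ε = 2 / π * (π * ε) := by field_simp
        _ ≤ Real.sin (π * ε) := this
      have hc1 : Real.cos (π * ε) ≤ 1 := Real.cos_le_one _
      have hdiv : Real.cos (π * ε) / Real.sin (π * ε) ≤ 1 / (2 * ε) :=
        div_le_div₀ zero_le_one hc1 (by linarith [hε.1]) h2ε
      have : g ε ≤ π * f ε ^ 2 * (1 / (2 * ε)) := by
        simp only [hg]
        exact mul_le_mul_of_nonneg_left hdiv (by positivity)
      refine this.trans (le_of_eq ?_)
      have hεne : ε ≠ 0 := hε.1.ne'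
      field_simp
  -- limit of g at 1 (squeeze)
  have T2 : Tendsto (fun ε => g (1 - ε)) l (𝓝 0) := by
    have hbnd : Tendsto (fun ε => -(π / 2 * (f (1 - ε) / ε) ^ 2 * ε)) l (𝓝 0) := by
      have := (((tendsto_const_nhds (x := π / 2)).mul (hs1.pow 2)).mul hidl).neg
      simpa using this
    refine tendsto_of_tendsto_of_tendsto_of_le_of_le' hbnd tendsto_const_nhds ?_ ?_
    · filter_upwards [hEv] with ε hε
      have hσ : 0 < Real.sin (π * ε) :=
        Real.sin_pos_of_pos_of_lt_pi (mul_pos Real.pi_pos hε.1)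
          (by nlinarith [Real.pi_pos, hε.2])
      have h2ε : 2 * ε ≤ Real.sin (π * ε) := by
        have := Real.mul_le_sin (x := π * ε) (mul_nonneg Real.pi_pos.le hε.1.le)
          (by nlinarith [Real.pi_pos, hε.2])
        calc 2 * ε = 2 / π * (π * ε) := by field_simp
        _ ≤ Real.sin (π * ε) := this
      have hc1 : Real.cos (π * ε) ≤ 1 := Real.cos_le_one _
      have hrw : g (1 - ε) = -(π * f (1 - ε) ^ 2 * (Real.cos (π * ε) / Real.sin (π * ε))) := by
        simp only [hg]
        have : π * (1 - ε) = π - π * ε := by ring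
        rw [this, Real.cos_pi_sub, Real.sin_pi_sub]
        ring
      rw [hrw]
      have hdiv : Real.cos (π * ε) / Real.sin (π * ε) ≤ 1 / (2 * ε) :=
        div_le_div₀ zero_le_one hc1 (by linarith [hε.1]) h2ε
      have h1' : π * f (1 - ε) ^ 2 * (Real.cos (π * ε) / Real.sin (π * ε))
          ≤ π * f (1 - ε) ^ 2 * (1 / (2 * ε)) :=
        mul_le_mul_of_nonneg_left hdiv (by positivity)
      have heq : π * f (1 - ε) ^ 2 * (1 / (2 * ε)) = π / 2 * (f (1 - ε) / ε) ^ 2 * ε := by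
        have hεne : ε ≠ 0 := hε.1.ne'
        field_simp
      linarith [heq ▸ h1']
    · filter_upwards [hEv] with ε hε
      have hσ : 0 < Real.sin (π * ε) :=
        Real.sin_pos_of_pos_of_lt_pi (mul_pos Real.pi_pos hε.1)
          (by nlinarith [Real.pi_pos, hε.2])
      have hcn : 0 ≤ Real.cos (π * ε) := by
        apply Real.cos_nonneg_of_mem_Icc
        constructor
        · nlinarith [Real.pi_pos, hε.1]
        · nlinarith [Real.pi_pos, hε.2]
      have hrw : g (1 - ε) = -(π * f (1 - ε) ^ 2 * (Real.cos (π * ε) / Real.sin (π * ε))) := by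
        simp only [hg]
        have : π * (1 - ε) = π - π * ε := by ring
        rw [this, Real.cos_pi_sub, Real.sin_pi_sub]
        ring
      rw [hrw]
      have : 0 ≤ π * f (1 - ε) ^ 2 * (Real.cos (π * ε) / Real.sin (π * ε)) := by positivity
      linarith
  -- limits of F
  have T3 : Tendsto (fun ε => F ε) l (𝓝 0) := by
    have := (hFc 0 ⟨le_rfl, zero_le_one⟩).tendsto
    have hmono : l ≤ 𝓝[Set.Icc (0:ℝ) 1] 0 := nhdsWithin_mono _ hIooIcc
    have hF0 : F 0 = 0 := intervalIntegral.integral_same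
    rw [hF0] at this
    exact this.mono_left hmono
  have T4 : Tendsto (fun ε => F (1 - ε)) l (𝓝 (F 1)) := by
    have hct := (hFc 1 ⟨zero_le_one, le_rfl⟩).tendsto
    have hm1' : Tendsto (fun ε : ℝ => 1 - ε) l (𝓝[Set.Icc (0:ℝ) 1] 1) :=
      hm1.mono_right (nhdsWithin_mono _ Set.diff_subset)
    exact hct.comp hm1'
  -- conclude
  have hfinal := le_of_tendsto_of_tendsto (T2.sub T1) (T4.sub T3) ?_
  · simpa using hfinal
  · filter_upwards [hEv] with ε hε
    exact key ε hε


theorem KSE_conservative_stability_bound (r : ℝ) (hr : 0 ≤ r)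
    (hrbound : Real.exp (3 * r) * (18 * r ^ 2 + 1) ≤ Real.pi ^ 2)
    (u u' u'' : ℝ → ℝ)
    (hu' : ∀ x ∈ Set.Icc (0:ℝ) 1, HasDerivWithinAt u (u' x) (Set.Icc 0 1) x)
    (hu'' : ∀ x ∈ Set.Icc (0:ℝ) 1, HasDerivWithinAt u' (u'' x) (Set.Icc 0 1) x)
    (hcont : ContinuousOn u'' (Set.Icc 0 1))
    (h0 : u 0 = 0) (h1 : u 1 = 0) (h0' : u' 0 = 0) (h1' : u' 1 = 0) :
    (∫ s in (0:ℝ)..1,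
      Real.exp (3 * r * s)
        * (-(9 * r ^ 2) * (9 * r ^ 2 + 1) * u s ^ 2
            + (36 * r ^ 2 + 2) * u' s ^ 2 - 2 * u'' s ^ 2)) ≤ 0 := by
  have hu'c : ContinuousOn u' (Set.Icc 0 1) := fun x hx => (hu'' x hx).continuousWithinAt
  have huc : ContinuousOn u (Set.Icc 0 1) := fun x hx => (hu' x hx).continuousWithinAt
  have hwirt := my_wirtinger u' u'' hu'' hcont h0' h1'
  set C := Real.exp (3 * r) with hC
  have hC1 : 1 ≤ C := Real.one_le_exp (by positivity)
  have huIcc : Set.uIcc (0:ℝ) 1 = Set.Icc (0:ℝ) 1 := Set.uIcc_of_le zero_le_one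
  have hIc : ContinuousOn (fun s => Real.exp (3 * r * s)
      * (-(9 * r ^ 2) * (9 * r ^ 2 + 1) * u s ^ 2
          + (36 * r ^ 2 + 2) * u' s ^ 2 - 2 * u'' s ^ 2)) (Set.Icc 0 1) := by
    apply ContinuousOn.mul
    · exact (Real.continuous_exp.comp (continuous_const.mul continuous_id)).continuousOn
    · exact ((continuousOn_const.mul (huc.pow 2)).add
        (continuousOn_const.mul (hu'c.pow 2))).sub (continuousOn_const.mul (hcont.pow 2))
  have hRc : ContinuousOn (fun s => C * (36 * r ^ 2 + 2) * u' s ^ 2 - 2 * u'' s ^ 2)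
      (Set.Icc 0 1) :=
    (continuousOn_const.mul (hu'c.pow 2)).sub (continuousOn_const.mul (hcont.pow 2))
  have step1 : (∫ s in (0:ℝ)..1,
      Real.exp (3 * r * s)
        * (-(9 * r ^ 2) * (9 * r ^ 2 + 1) * u s ^ 2
            + (36 * r ^ 2 + 2) * u' s ^ 2 - 2 * u'' s ^ 2))
      ≤ ∫ s in (0:ℝ)..1, (C * (36 * r ^ 2 + 2) * u' s ^ 2 - 2 * u'' s ^ 2) := by
    apply intervalIntegral.integral_mono_on zero_le_one
      ((hIc.mono huIcc.subset).intervalIntegrable)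
      ((hRc.mono huIcc.subset).intervalIntegrable)
    intro s hs
    have hs0 : (0:ℝ) ≤ s := hs.1
    have hs1 : s ≤ 1 := hs.2
    have he1 : 1 ≤ Real.exp (3 * r * s) :=
      Real.one_le_exp (mul_nonneg (mul_nonneg (by norm_num) hr) hs0)
    have heC : Real.exp (3 * r * s) ≤ C := Real.exp_le_exp.mpr (by nlinarith)
    set e := Real.exp (3 * r * s) with he
    have t1 : e * ((36 * r ^ 2 + 2) * u' s ^ 2) ≤ C * ((36 * r ^ 2 + 2) * u' s ^ 2) :=
      mul_le_mul_of_nonneg_right heC (by positivity)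
    have t2 : 1 * (2 * u'' s ^ 2) ≤ e * (2 * u'' s ^ 2) :=
      mul_le_mul_of_nonneg_right he1 (by positivity)
    have t3 : 0 ≤ e * ((9 * r ^ 2) * (9 * r ^ 2 + 1) * u s ^ 2) := by positivity
    nlinarith [t1, t2, t3]
  have i1 : IntervalIntegrable (fun s => C * (36 * r ^ 2 + 2) * u' s ^ 2) volume 0 1 :=
    ((continuousOn_const.mul (hu'c.pow 2)).mono huIcc.subset).intervalIntegrable
  have i2 : IntervalIntegrable (fun s => 2 * u'' s ^ 2) volume 0 1 :=
    ((continuousOn_const.mul (hcont.pow 2)).mono huIcc.subset).intervalIntegrable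
  have step2 : (∫ s in (0:ℝ)..1, (C * (36 * r ^ 2 + 2) * u' s ^ 2 - 2 * u'' s ^ 2))
      = C * (36 * r ^ 2 + 2) * (∫ s in (0:ℝ)..1, u' s ^ 2)
        - 2 * ∫ s in (0:ℝ)..1, u'' s ^ 2 := by
    rw [intervalIntegral.integral_sub i1 i2, intervalIntegral.integral_const_mul,
      intervalIntegral.integral_const_mul]
  have hA : 0 ≤ ∫ s in (0:ℝ)..1, u' s ^ 2 :=
    intervalIntegral.integral_nonneg zero_le_one (fun s _ => sq_nonneg _)
  have hfin : C * (36 * r ^ 2 + 2) * (∫ s in (0:ℝ)..1, u' s ^ 2)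
      - 2 * (∫ s in (0:ℝ)..1, u'' s ^ 2) ≤ 0 := by
    nlinarith [mul_le_mul_of_nonneg_right hrbound hA, hwirt]
  linarith [step1, step2 ▸ hfin]
end
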